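/- arXiv:1810.08294 — 3 statements merged into one kernel-verified Lean document; each statement's English description precedes it below -/
import Mathlib

section
/- Let l ≥ 1 be an integer, δ₀ > 0, M > 0, and let ω : (0,δ₀] → ℝ be continuous with |ω(x)| ≤ M x² for all x ∈ (0,δ₀]. Then there exist δ ∈ (0,δ₀], a constant C > 0, and twice continuously differentiable solutions y₁, y₂ : (0,δ] → ℝ of the ordinary differential equation y''(x) = (l(l+1)/x²)(1 + ω(x)) y(x) such that |x^{−(l+1)} y₁(x) − 1| ≤ C x² and |x^{l} y₂(x) − 1| ≤ C x² for all x ∈ (0,δ]. In particular y₁ and y₂ are linearly independent. -/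
open Real Filter

noncomputable section

namespace Stmt15

open MeasureTheory intervalIntegral


lemma ftc_deriv (f : ℝ → ℝ) (a x lo hi : ℝ) (hx : x ∈ Set.Ioo lo hi)
    (hcont : ContinuousOn f (Set.Ioo lo hi))
    (hint : IntervalIntegrable f volume a x) :
    HasDerivAt (fun y => ∫ t in a..y, f t) (f x) x :=
  integral_hasDerivAt_right hint
    (hcont.stronglyMeasurableAtFilter isOpen_Ioo x hx)
    (hcont.continuousAt (isOpen_Ioo.mem_nhds hx))

lemma ftc_deriv_left (f : ℝ → ℝ) (b x lo hi : ℝ) (hx : x ∈ Set.Ioo lo hi)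
    (hcont : ContinuousOn f (Set.Ioo lo hi))
    (hint : IntervalIntegrable f volume x b) :
    HasDerivAt (fun y => ∫ t in y..b, f t) (-f x) x :=
  integral_hasDerivAt_left hint (hcont.stronglyMeasurableAtFilter isOpen_Ioo x hx)
    (hcont.continuousAt (isOpen_Ioo.mem_nhds hx))

lemma ibound (f : ℝ → ℝ) (y b : ℝ) (m : ℕ) (hy : 0 ≤ y) (hb : 0 ≤ b)
    (hf : IntervalIntegrable f volume 0 y)
    (hfs : ∀ s ∈ Set.Ioc (0:ℝ) y, |f s| ≤ b * s ^ m) :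
    |∫ s in (0:ℝ)..y, f s| ≤ b * y ^ (m+1) / (m+1) := by
  have h1 : |∫ s in (0:ℝ)..y, f s| ≤ ∫ s in (0:ℝ)..y, |f s| :=
    intervalIntegral.abs_integral_le_integral_abs hy
  have h2 : (∫ s in (0:ℝ)..y, |f s|) ≤ ∫ s in (0:ℝ)..y, b * s ^ m := by
    rw [intervalIntegral.integral_of_le hy, intervalIntegral.integral_of_le hy]
    exact MeasureTheory.setIntegral_mono_on hf.abs.1
      ((continuous_const.mul (continuous_pow m)).intervalIntegrable 0 y).1
      measurableSet_Ioc fun s hs => hfs s hs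
  have h3 : (∫ s in (0:ℝ)..y, b * s ^ m) = b * y ^ (m+1) / (m+1) := by
    rw [intervalIntegral.integral_const_mul, integral_pow]
    rw [zero_pow (Nat.succ_ne_zero m)]
    push_cast
    ring
  linarith

lemma ibound2 (f : ℝ → ℝ) (s d b : ℝ) (l : ℕ) (hl : 1 ≤ l) (hs : 0 < s) (hsd : s ≤ d)
    (hb : 0 ≤ b) (hf : IntervalIntegrable f volume s d)
    (hfs : ∀ t ∈ Set.Icc s d, |f t| ≤ b * t ^ (-(2*l:ℤ))) :
    |∫ t in s..d, f t| ≤ b * s ^ (-(2*l:ℤ)+1) / (2*l-1) := by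
  have hd : (0:ℝ) < d := lt_of_lt_of_le hs hsd
  have hl1 : (1:ℝ) ≤ 2*(l:ℝ) - 1 := by
    have : (1:ℝ) ≤ (l:ℝ) := by exact_mod_cast hl
    linarith
  have hzc : ContinuousOn (fun t : ℝ => b * t ^ (-(2*l:ℤ))) (Set.uIcc s d) := by
    intro t ht
    rw [Set.uIcc_of_le hsd] at ht
    exact (continuousAt_const.mul
      (continuousAt_zpow₀ _ _ (Or.inl (lt_of_lt_of_le hs ht.1).ne'))).continuousWithinAt
  have hgint : IntervalIntegrable (fun t : ℝ => b * t ^ (-(2*l:ℤ))) volume s d :=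
    hzc.intervalIntegrable
  have h1 : |∫ t in s..d, f t| ≤ ∫ t in s..d, |f t| :=
    intervalIntegral.abs_integral_le_integral_abs hsd
  have h2 : (∫ t in s..d, |f t|) ≤ ∫ t in s..d, b * t ^ (-(2*l:ℤ)) :=
    intervalIntegral.integral_mono_on hsd hf.abs hgint fun t ht => hfs t ht
  have h3 : (∫ t in s..d, b * t ^ (-(2*l:ℤ)))
      = b * ((d ^ (-(2*l:ℤ)+1) - s ^ (-(2*l:ℤ)+1)) / (-(2*(l:ℝ))+1)) := by
    rw [intervalIntegral.integral_const_mul, integral_zpow]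
    · push_cast
      ring_nf
    · refine Or.inr ⟨by omega, ?_⟩
      rw [Set.uIcc_of_le hsd]
      intro h0
      exact absurd h0.1 (not_le.mpr hs)
  have hdpos : (0:ℝ) < d ^ (-(2*l:ℤ)+1) := zpow_pos hd _
  have hspos : (0:ℝ) < s ^ (-(2*l:ℤ)+1) := zpow_pos hs _
  have e1 : (d ^ (-(2*l:ℤ)+1) - s ^ (-(2*l:ℤ)+1)) / (-(2*(l:ℝ))+1)
      = (s ^ (-(2*l:ℤ)+1) - d ^ (-(2*l:ℤ)+1)) / (2*(l:ℝ)-1) := by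
    rw [div_eq_div_iff (by linarith) (by linarith)]
    ring
  have e2 : (s ^ (-(2*l:ℤ)+1) - d ^ (-(2*l:ℤ)+1)) / (2*(l:ℝ)-1)
      ≤ s ^ (-(2*l:ℤ)+1) / (2*(l:ℝ)-1) := by
    gcongr
    linarith
  have h4 : b * ((d ^ (-(2*l:ℤ)+1) - s ^ (-(2*l:ℤ)+1)) / (-(2*(l:ℝ))+1))
      ≤ b * s ^ (-(2*l:ℤ)+1) / (2*l-1) := by
    rw [e1, mul_div_assoc]
    exact mul_le_mul_of_nonneg_left (e1 ▸ e2) hb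
  linarith



lemma volterra (δ δ₁ : ℝ) (hδ : 0 < δ) (hδ₁ : δ < δ₁) (κ : ℝ) (hκ : 0 ≤ κ)
    (hκδ : κ * δ ^ 2 ≤ 1)
    (H : (BoundedContinuousFunction ℝ ℝ) → ℝ → ℝ)
    (Hcont : ∀ w, ContinuousOn (H w) (Set.Icc 0 δ₁))
    (Hlin : ∀ w w', ∀ s ∈ Set.Ioc (0:ℝ) δ, |H w s - H w' s| ≤ κ * dist w w' * s)
    (Hbound : ∀ w, ∀ s ∈ Set.Ioc (0:ℝ) δ, |H w s| ≤ κ * ‖w‖ * s) :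
    ∃ u : BoundedContinuousFunction ℝ ℝ, ‖u‖ ≤ 2 ∧
      (∀ x ∈ Set.Icc (0:ℝ) δ, u x = 1 + ∫ s in (0:ℝ)..x, H u s) ∧
      (∀ x ∈ Set.Icc (0:ℝ) δ, |u x - 1| ≤ κ * x ^ 2) := by
  set ρ : ℝ → ℝ := fun x => max 0 (min x δ) with hρ
  have hρmem : ∀ x, ρ x ∈ Set.Icc 0 δ := fun x =>
    ⟨le_max_left _ _, max_le (le_of_lt hδ) (min_le_right _ _)⟩
  have hρcont : Continuous ρ := continuous_const.max (continuous_id.min continuous_const)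
  have hρid : ∀ x ∈ Set.Icc (0:ℝ) δ, ρ x = x := fun x hx => by
    simp only [hρ, min_eq_left hx.2, max_eq_right hx.1]
  have hsub : ∀ y ∈ Set.Icc (0:ℝ) δ, Set.uIcc (0:ℝ) y ⊆ Set.Icc 0 δ₁ := by
    intro y hy
    rw [Set.uIcc_of_le hy.1]
    exact Set.Icc_subset_Icc le_rfl (le_trans hy.2 (le_of_lt hδ₁))
  have hint : ∀ w, ∀ y ∈ Set.Icc (0:ℝ) δ, IntervalIntegrable (H w) volume 0 y :=
    fun w y hy => ((Hcont w).mono (hsub y hy)).intervalIntegrable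
  have hIb : ∀ (w : BoundedContinuousFunction ℝ ℝ) (b : ℝ), 0 ≤ b →
      (∀ s ∈ Set.Ioc (0:ℝ) δ, |H w s| ≤ b * s) →
      ∀ x ∈ Set.Icc (0:ℝ) δ, |∫ s in (0:ℝ)..x, H w s| ≤ b * x ^ 2 / 2 := by
    intro w b hb hbd x hx
    have := ibound (H w) x b 1 hx.1 hb (hint w x hx) (fun s hs => by
      simpa using hbd s (Set.Ioc_subset_Ioc_right hx.2 hs))
    norm_num at this
    linarith
  -- the Picard map
  have key : ∀ w : BoundedContinuousFunction ℝ ℝ, ∀ x, |∫ s in (0:ℝ)..(ρ x), H w s| ≤ κ * ‖w‖ * δ ^ 2 / 2 := by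
    intro w x
    have h1 := hIb w (κ * ‖w‖) (by positivity) (Hbound w) (ρ x) (hρmem x)
    have h2 : (ρ x) ^ 2 ≤ δ ^ 2 := by
      have := hρmem x
      nlinarith [this.1, this.2]
    have h3 : κ * ‖w‖ * (ρ x) ^ 2 / 2 ≤ κ * ‖w‖ * δ ^ 2 / 2 := by
      nlinarith [mul_nonneg hκ (norm_nonneg w)]
    linarith
  set T : (BoundedContinuousFunction ℝ ℝ) → (BoundedContinuousFunction ℝ ℝ) := fun w =>
    BoundedContinuousFunction.ofNormedAddCommGroup
      (fun x => 1 + ∫ s in (0:ℝ)..(ρ x), H w s)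
      (by
        refine continuous_const.add ?_
        have h0δ₁ : (0:ℝ) ≤ δ₁ := le_of_lt (lt_trans hδ hδ₁)
        have hPint : IntervalIntegrable (H w) volume 0 δ₁ := by
          apply ContinuousOn.intervalIntegrable
          rw [Set.uIcc_of_le h0δ₁]
          exact Hcont w
        have hP : ContinuousOn (fun y => ∫ s in (0:ℝ)..y, H w s) (Set.Icc 0 δ₁) := by
          have := intervalIntegral.continuousOn_primitive_interval' hPint Set.left_mem_uIcc
          rwa [Set.uIcc_of_le h0δ₁] at this
        exact hP.comp_continuous hρcont fun x =>
          Set.Icc_subset_Icc le_rfl hδ₁.le (hρmem x))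
      (1 + κ * ‖w‖ * δ ^ 2 / 2)
      (by
        intro x
        have := key w x
        rw [Real.norm_eq_abs]
        calc |1 + ∫ s in (0:ℝ)..(ρ x), H w s| ≤ 1 + |∫ s in (0:ℝ)..(ρ x), H w s| := by
              exact (abs_add_le _ _).trans (by norm_num)
          _ ≤ 1 + κ * ‖w‖ * δ ^ 2 / 2 := by linarith)
    with hT
  have hTapp : ∀ w x, T w x = 1 + ∫ s in (0:ℝ)..(ρ x), H w s := fun w x => rfl
  have hlip : ∀ w w' : BoundedContinuousFunction ℝ ℝ, dist (T w) (T w') ≤ (1/2) * dist w w' := by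
    intro w w'
    rw [BoundedContinuousFunction.dist_le (by positivity)]
    intro x
    rw [Real.dist_eq, hTapp, hTapp]
    have hdiff : (1 + ∫ s in (0:ℝ)..(ρ x), H w s) - (1 + ∫ s in (0:ℝ)..(ρ x), H w' s)
        = ∫ s in (0:ℝ)..(ρ x), (H w s - H w' s) := by
      rw [intervalIntegral.integral_sub (hint w _ (hρmem x)) (hint w' _ (hρmem x))]
      ring
    rw [hdiff]
    have hb2 : ∀ s ∈ Set.Ioc (0:ℝ) δ, |H w s - H w' s| ≤ (κ * dist w w') * s :=
      fun s hs => Hlin w w' s hs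
    have h1 := ibound (fun s => H w s - H w' s) (ρ x) (κ * dist w w') 1 (hρmem x).1
      (by positivity) ((hint w _ (hρmem x)).sub (hint w' _ (hρmem x)))
      (fun s hs => by simpa using hb2 s (Set.Ioc_subset_Ioc_right (hρmem x).2 hs))
    norm_num at h1
    have h2 : (ρ x) ^ 2 ≤ δ ^ 2 := by
      have := hρmem x
      nlinarith [this.1, this.2]
    have h3 : κ * dist w w' * (ρ x) ^ 2 / 2 ≤ κ * dist w w' * δ ^ 2 / 2 := by
      have : (0:ℝ) ≤ κ * dist w w' := by positivity
      nlinarith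
    have h4 : κ * dist w w' * δ ^ 2 / 2 ≤ (1/2) * dist w w' := by
      nlinarith [dist_nonneg (x := w) (y := w'), sq_nonneg δ]
    linarith
  have hcontr : ContractingWith (1/2 : NNReal) T := by
    constructor
    · rw [← NNReal.coe_lt_coe]
      norm_num
    · apply LipschitzWith.of_dist_le_mul
      intro w w'
      have := hlip w w'
      rw [NNReal.coe_div]
      norm_num
      linarith [hlip w w']
  obtain ⟨u, hufix⟩ : ∃ u, Function.IsFixedPt T u := ⟨_, hcontr.fixedPoint_isFixedPt⟩
  have huapp : ∀ x, u x = 1 + ∫ s in (0:ℝ)..(ρ x), H u s := by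
    intro x
    conv_lhs => rw [← hufix]
    exact hTapp u x
  have hunorm : ‖u‖ ≤ 2 := by
    have h1 : ‖u‖ ≤ 1 + κ * ‖u‖ * δ ^ 2 / 2 := by
      rw [BoundedContinuousFunction.norm_le (by positivity)]
      intro x
      rw [Real.norm_eq_abs, huapp x]
      have := key u x
      calc |1 + ∫ s in (0:ℝ)..(ρ x), H u s| ≤ 1 + |∫ s in (0:ℝ)..(ρ x), H u s| :=
            (abs_add_le _ _).trans (by norm_num)
        _ ≤ 1 + κ * ‖u‖ * δ ^ 2 / 2 := by linarith
    nlinarith [norm_nonneg u, hκ, sq_nonneg δ]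
  refine ⟨u, hunorm, ?_, ?_⟩
  · intro x hx
    rw [huapp x, hρid x hx]
  · intro x hx
    have heq : u x - 1 = ∫ s in (0:ℝ)..x, H u s := by
      rw [huapp x, hρid x hx]; ring
    rw [heq]
    have h1 := hIb u (κ * ‖u‖) (by positivity) (Hbound u) x hx
    have h2 : κ * ‖u‖ * x ^ 2 / 2 ≤ κ * x ^ 2 := by
      nlinarith [hunorm, mul_nonneg hκ (sq_nonneg x)]
    linarith



lemma zpow_aux1 (t : ℝ) (ht : 0 < t) (k : ℕ) :
    t ^ (2:ℕ) / t ^ (2*k+4) = t ^ (-(2*((k+1:ℕ)):ℤ)) := by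
  rw [div_eq_iff (pow_ne_zero _ (ne_of_gt ht))]
  rw [← zpow_natCast t (2*k+4), ← zpow_add₀ (ne_of_gt ht), ← zpow_natCast t 2]
  congr 1
  push_cast
  ring

lemma zpow_aux2 (s : ℝ) (hs : 0 < s) (k : ℕ) :
    s ^ (2*k+2) * s ^ (-(2*((k+1:ℕ)):ℤ)+1) = s := by
  rw [← zpow_natCast s (2*k+2), ← zpow_add₀ (ne_of_gt hs)]
  have h : ((2*k+2 : ℕ):ℤ) + (-(2*((k+1:ℕ)):ℤ)+1) = 1 := by push_cast; ring
  rw [h, zpow_one]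

end Stmt15


open Stmt15 MeasureTheory intervalIntegral

set_option maxHeartbeats 2000000 in
/-- near the center, the Liouville normal form
`y'' = (l(l+1)/x²)(1+ω(x))y` with `|ω(x)| ≤ M x²` possesses two linearly
independent twice continuously differentiable solutions `y₁ ∼ x^{l+1}` and
`y₂ ∼ x^{−l}` with quantitative error bounds `O(x²)`. -/
theorem statement_15 (l : ℕ) (hl : 1 ≤ l) (δ₀ M : ℝ) (hδ₀ : 0 < δ₀) (hM : 0 < M)
    (ω : ℝ → ℝ) (hω : ContinuousOn ω (Set.Ioc 0 δ₀))
    (hωb : ∀ x ∈ Set.Ioc (0 : ℝ) δ₀, |ω x| ≤ M * x ^ 2) :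
    ∃ δ ∈ Set.Ioc (0 : ℝ) δ₀, ∃ C > 0, ∃ y₁ y₂ d₁ d₂ : ℝ → ℝ,
      (∀ x ∈ Set.Ioc (0 : ℝ) δ, HasDerivAt y₁ (d₁ x) x) ∧
      (∀ x ∈ Set.Ioc (0 : ℝ) δ,
        HasDerivAt d₁ (((l * (l + 1) : ℕ) : ℝ) / x ^ 2 * (1 + ω x) * y₁ x) x) ∧
      (∀ x ∈ Set.Ioc (0 : ℝ) δ, HasDerivAt y₂ (d₂ x) x) ∧
      (∀ x ∈ Set.Ioc (0 : ℝ) δ,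
        HasDerivAt d₂ (((l * (l + 1) : ℕ) : ℝ) / x ^ 2 * (1 + ω x) * y₂ x) x) ∧
      (∀ x ∈ Set.Ioc (0 : ℝ) δ, |y₁ x / x ^ (l + 1) - 1| ≤ C * x ^ 2) ∧
      (∀ x ∈ Set.Ioc (0 : ℝ) δ, |x ^ l * y₂ x - 1| ≤ C * x ^ 2) ∧
      (∀ a b : ℝ, (∀ x ∈ Set.Ioc (0 : ℝ) δ, a * y₁ x + b * y₂ x = 0) →
        a = 0 ∧ b = 0) := by
  classical
  obtain ⟨k, rfl⟩ : ∃ k, l = k + 1 := ⟨l - 1, by omega⟩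
  clear hl
  set c : ℝ := ((k:ℝ)+1) * ((k:ℝ)+2) with hc
  have hk0 : (0:ℝ) ≤ (k:ℝ) := Nat.cast_nonneg k
  have hc0 : 0 < c := by positivity
  have hc2 : (2:ℝ) ≤ c := by nlinarith
  have hcM : 0 < c * M := mul_pos hc0 hM
  have hcast : (((k+1) * (k+1+1) : ℕ) : ℝ) = c := by rw [hc]; push_cast; ring
  set δ : ℝ := min (min (δ₀/2) 1) (Real.sqrt (1/(2*c*M))) with hδdef
  have hδpos : 0 < δ :=
    lt_min (lt_min (by linarith) one_pos) (Real.sqrt_pos.mpr (by positivity))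
  have hδδ₀2 : δ ≤ δ₀/2 := le_trans (min_le_left _ _) (min_le_left _ _)
  have hδ1 : δ ≤ 1 := le_trans (min_le_left _ _) (min_le_right _ _)
  have hδδ₀ : δ < δ₀ := by linarith
  have hδsq : c * M * δ^2 ≤ 1/2 := by
    have h1 : δ ≤ Real.sqrt (1/(2*c*M)) := min_le_right _ _
    have h0 : (0:ℝ) < 1/(2*c*M) := by positivity
    have hss := Real.sq_sqrt h0.le
    have h2 : δ^2 ≤ 1/(2*c*M) := by nlinarith [hδpos.le, Real.sqrt_nonneg (1/(2*c*M))]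
    have h3 : c * M * δ^2 ≤ c*M*(1/(2*c*M)) := by nlinarith
    have h4 : c*M*(1/(2*c*M)) = 1/2 := by field_simp
    linarith
  set δ₁ : ℝ := (δ + δ₀)/2 with hδ₁def
  have hδδ₁ : δ < δ₁ := by rw [hδ₁def]; linarith
  have hδ₁δ₀ : δ₁ < δ₀ := by rw [hδ₁def]; linarith
  have hδ₁pos : 0 < δ₁ := lt_trans hδpos hδδ₁
  have hωa : ∀ t : ℝ, 0 < t → t < δ₀ → ContinuousAt ω t := fun t h1 h2 =>
    hω.continuousAt (Ioc_mem_nhds h1 h2)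
  -- kernel for the regular solution
  set K : ℝ → ℝ := fun t => if 0 < t then c * ω t * t^(2*k+2) else 0 with hK
  have hKbound : ∀ t : ℝ, 0 < t → t < δ₀ → |K t| ≤ c * M * t^(2*k+4) := by
    intro t h1 h2
    simp only [hK, if_pos h1]
    have hωt := hωb t ⟨h1, h2.le⟩
    have habs : |c * ω t * t^(2*k+2)| = c * |ω t| * t^(2*k+2) := by
      rw [abs_mul, abs_mul, abs_of_pos hc0, abs_of_nonneg (pow_nonneg h1.le _)]
    rw [habs]
    calc c * |ω t| * t^(2*k+2) ≤ c * (M*t^2) * t^(2*k+2) :=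
          mul_le_mul_of_nonneg_right (mul_le_mul_of_nonneg_left hωt hc0.le)
            (pow_nonneg h1.le _)
      _ = c*M*t^(2*k+4) := by ring
  have hKA : ∀ t ∈ Set.Ioo (-1:ℝ) δ₀, ContinuousAt K t := by
    intro t ht
    rcases lt_trichotomy t 0 with h|h|h
    · have hev : K =ᶠ[nhds t] fun _ => (0:ℝ) := by
        filter_upwards [Iio_mem_nhds h] with s hs
        simp only [hK, if_neg (not_lt.mpr (Set.mem_Iio.mp hs).le)]
      exact continuousAt_const.congr hev.symm
    · subst h
      have hK0 : K 0 = 0 := by simp [hK]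
      have : Tendsto K (nhds 0) (nhds 0) := by
        apply squeeze_zero_norm' (a := fun s => c*M*|s|^(2*k+4))
        · filter_upwards [Iio_mem_nhds hδ₀] with s hs
          rcases le_or_gt s 0 with h'|h'
          · simp only [hK, if_neg (not_lt.mpr h'), norm_zero]
            positivity
          · rw [Real.norm_eq_abs]
            calc |K s| ≤ c * M * s^(2*k+4) := hKbound s h' (Set.mem_Iio.mp hs)
              _ = c * M * |s|^(2*k+4) := by rw [abs_of_pos h']
        · have hcont : Continuous fun s:ℝ => c*M*|s|^(2*k+4) :=
            continuous_const.mul (continuous_abs.pow _)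
          have := hcont.tendsto 0
          simpa using this
      rw [ContinuousAt, hK0]
      exact this
    · have hcont : ContinuousAt (fun s => c * ω s * s^(2*k+2)) t :=
        (continuousAt_const.mul (hωa t h ht.2)).mul ((continuous_pow _).continuousAt)
      apply hcont.congr
      filter_upwards [lt_mem_nhds h] with s hs
      simp only [hK, if_pos hs]
  
  have hwnorm : ∀ (w : BoundedContinuousFunction ℝ ℝ) (t : ℝ), |w t| ≤ ‖w‖ := fun w t => by
    have := w.norm_coe_le_norm t
    rwa [Real.norm_eq_abs] at this
  have hwdist : ∀ (w w' : BoundedContinuousFunction ℝ ℝ) (t : ℝ),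
      |w t - w' t| ≤ dist w w' := fun w w' t => by
    have := BoundedContinuousFunction.dist_coe_le_dist (f := w) (g := w') t
    rwa [Real.dist_eq] at this
  have hgA : ∀ (w : BoundedContinuousFunction ℝ ℝ), ∀ t ∈ Set.Ioo (-1:ℝ) δ₀,
      ContinuousAt (fun t => K t * w t) t := fun w t ht =>
    (hKA t ht).mul w.continuous.continuousAt
  have hsubO : ∀ s : ℝ, 0 ≤ s → s < δ₀ → Set.uIcc (0:ℝ) s ⊆ Set.Ioo (-1:ℝ) δ₀ := by
    intro s h0 h1
    rw [Set.uIcc_of_le h0]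
    intro t ht
    exact ⟨lt_of_lt_of_le (by norm_num) ht.1, lt_of_le_of_lt ht.2 h1⟩
  have hgint : ∀ (w : BoundedContinuousFunction ℝ ℝ) (s : ℝ), 0 ≤ s → s < δ₀ →
      IntervalIntegrable (fun t => K t * w t) volume 0 s := by
    intro w s h0 h1
    apply ContinuousOn.intervalIntegrable
    intro t ht
    exact ((hgA w t (hsubO s h0 h1 ht))).continuousWithinAt
  have hgptw : ∀ (w : BoundedContinuousFunction ℝ ℝ) (s : ℝ), s < δ₀ →
      ∀ t ∈ Set.Ioc (0:ℝ) s, |K t * w t| ≤ (c*M*‖w‖) * t^(2*k+4) := by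
    intro w s h1 t ht
    rw [abs_mul]
    calc |K t| * |w t| ≤ (c*M*t^(2*k+4)) * ‖w‖ :=
        mul_le_mul (hKbound t ht.1 (lt_of_le_of_lt ht.2 h1))
          (hwnorm w t) (abs_nonneg _)
          (mul_nonneg (mul_nonneg hc0.le hM.le) (pow_nonneg ht.1.le _))
      _ = (c*M*‖w‖) * t^(2*k+4) := by ring
  have hGb : ∀ (w : BoundedContinuousFunction ℝ ℝ) (s : ℝ), 0 < s → s < δ₀ →
      |∫ t in (0:ℝ)..s, K t * w t| ≤ (c*M*‖w‖) * s^(2*k+4+1) / ((2*k+4:ℕ)+1) :=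
    fun w s h0 h1 => ibound _ s _ (2*k+4) h0.le
      (mul_nonneg (mul_nonneg hc0.le hM.le) (norm_nonneg w)) (hgint w s h0.le h1)
      (hgptw w s h1)
  have hGlinb : ∀ (w w' : BoundedContinuousFunction ℝ ℝ) (s : ℝ), 0 < s → s < δ₀ →
      |∫ t in (0:ℝ)..s, (K t * w t - K t * w' t)|
        ≤ (c*M*dist w w') * s^(2*k+4+1) / ((2*k+4:ℕ)+1) := by
    intro w w' s h0 h1
    refine ibound _ s _ (2*k+4) h0.le
      (mul_nonneg (mul_nonneg hc0.le hM.le) dist_nonneg)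
      ((hgint w s h0.le h1).sub (hgint w' s h0.le h1)) ?_
    intro t ht
    rw [← mul_sub, abs_mul]
    calc |K t| * |w t - w' t| ≤ (c*M*t^(2*k+4)) * dist w w' :=
        mul_le_mul (hKbound t ht.1 (lt_of_le_of_lt ht.2 h1))
          (hwdist w w' t) (abs_nonneg _)
          (mul_nonneg (mul_nonneg hc0.le hM.le) (pow_nonneg ht.1.le _))
      _ = (c*M*dist w w') * t^(2*k+4) := by ring
  -- the outer integrand for the regular solution
  set H₁ : BoundedContinuousFunction ℝ ℝ → ℝ → ℝ := fun w s =>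
    if 0 < s then (∫ t in (0:ℝ)..s, K t * w t) / s^(2*k+4) else 0 with hH₁
  have hH₁b : ∀ (w : BoundedContinuousFunction ℝ ℝ) (s:ℝ), 0 < s → s < δ₀ →
      |H₁ w s| ≤ (c*M*‖w‖/((2*(k:ℝ))+5)) * s := by
    intro w s h0 h1
    simp only [hH₁, if_pos h0]
    rw [abs_div, abs_of_pos (pow_pos h0 (2*k+4)), div_le_iff₀ (pow_pos h0 (2*k+4))]
    calc |∫ t in (0:ℝ)..s, K t * w t|
        ≤ (c*M*‖w‖) * s^(2*k+4+1) / ((2*k+4:ℕ)+1) := hGb w s h0 h1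
      _ = (c*M*‖w‖/((2*(k:ℝ))+5)) * s * s^(2*k+4) := by push_cast; ring
  have hgcontOn : ∀ (w : BoundedContinuousFunction ℝ ℝ),
      ContinuousOn (fun t => K t * w t) (Set.Ioo (0:ℝ) δ₀) :=
    fun w t ht => ((hgA w t ⟨by linarith [ht.1], ht.2⟩)).continuousWithinAt
  have hGderiv : ∀ (w : BoundedContinuousFunction ℝ ℝ) (x:ℝ), 0 < x → x < δ₀ →
      HasDerivAt (fun s => ∫ t in (0:ℝ)..s, K t * w t) (K x * w x) x :=
    fun w x h0 h1 => ftc_deriv _ 0 x 0 δ₀ ⟨h0, h1⟩ (hgcontOn w) (hgint w x h0.le h1)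
  have hH₁cont : ∀ w, ContinuousOn (H₁ w) (Set.Icc 0 δ₁) := by
    intro w s hs
    rcases eq_or_lt_of_le hs.1 with h0|h0
    · apply ContinuousAt.continuousWithinAt
      rw [← h0]
      have hH₁0 : H₁ w 0 = 0 := by simp [hH₁]
      rw [ContinuousAt, hH₁0]
      apply squeeze_zero_norm' (a := fun s => (c*M*‖w‖/((2*(k:ℝ))+5)) * |s|)
      · filter_upwards [Iio_mem_nhds hδ₀] with r hr
        rcases le_or_gt r 0 with h'|h'
        · simp only [hH₁, if_neg (not_lt.mpr h'), norm_zero]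
          positivity
        · rw [Real.norm_eq_abs]
          calc |H₁ w r| ≤ (c*M*‖w‖/((2*(k:ℝ))+5)) * r :=
              hH₁b w r h' (Set.mem_Iio.mp hr)
            _ = (c*M*‖w‖/((2*(k:ℝ))+5)) * |r| := by rw [abs_of_pos h']
      · have hcont : Continuous fun r:ℝ => (c*M*‖w‖/((2*(k:ℝ))+5)) * |r| :=
          continuous_const.mul continuous_abs
        simpa using hcont.tendsto 0
    · apply ContinuousAt.continuousWithinAt
      have hcontG := (hGderiv w s h0 (lt_of_le_of_lt hs.2 hδ₁δ₀)).continuousAt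
      have hq : ContinuousAt (fun r => (∫ t in (0:ℝ)..r, K t * w t) / r^(2*k+4)) s :=
        hcontG.div ((continuous_pow _).continuousAt) (pow_ne_zero _ (ne_of_gt h0))
      apply hq.congr
      filter_upwards [lt_mem_nhds h0] with r hr
      simp only [hH₁, if_pos hr]
  have hH₁bound : ∀ (w : BoundedContinuousFunction ℝ ℝ), ∀ s ∈ Set.Ioc (0:ℝ) δ,
      |H₁ w s| ≤ (c*M) * ‖w‖ * s := by
    intro w s hs
    have h1 := hH₁b w s hs.1 (lt_of_le_of_lt hs.2 hδδ₀)
    have h2 : c*M*‖w‖/((2*(k:ℝ))+5) ≤ c*M*‖w‖ :=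
      div_le_self (mul_nonneg (mul_nonneg hc0.le hM.le) (norm_nonneg w)) (by linarith)
    nlinarith [hs.1.le]
  have hH₁lin : ∀ (w w' : BoundedContinuousFunction ℝ ℝ), ∀ s ∈ Set.Ioc (0:ℝ) δ,
      |H₁ w s - H₁ w' s| ≤ (c*M) * dist w w' * s := by
    intro w w' s hs
    have h0 := hs.1
    have h1 : s < δ₀ := lt_of_le_of_lt hs.2 hδδ₀
    have hdiff : H₁ w s - H₁ w' s
        = (∫ t in (0:ℝ)..s, (K t * w t - K t * w' t)) / s^(2*k+4) := by
      simp only [hH₁, if_pos h0]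
      rw [intervalIntegral.integral_sub (hgint w s h0.le h1) (hgint w' s h0.le h1)]
      ring
    rw [hdiff, abs_div, abs_of_pos (pow_pos h0 (2*k+4)), div_le_iff₀ (pow_pos h0 (2*k+4))]
    calc |∫ t in (0:ℝ)..s, (K t * w t - K t * w' t)|
        ≤ (c*M*dist w w') * s^(2*k+4+1) / ((2*k+4:ℕ)+1) := hGlinb w w' s h0 h1
      _ ≤ (c*M) * dist w w' * s * s^(2*k+4) := by
          have hd : (0:ℝ) ≤ c*M*dist w w' := mul_nonneg (mul_nonneg hc0.le hM.le) dist_nonneg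
          have hX : (0:ℝ) ≤ (c*M*dist w w') * s^(2*k+4+1) := mul_nonneg hd (pow_nonneg h0.le _)
          have h5 : (c*M*dist w w') * s^(2*k+4+1) / ((2*k+4:ℕ)+1)
              ≤ (c*M*dist w w') * s^(2*k+4+1) := by
            apply div_le_self hX
            push_cast
            linarith [hk0]
          have h6 : (c*M*dist w w') * s^(2*k+4+1) = (c*M)*dist w w'*s*s^(2*k+4) := by ring
          linarith
  
  -- fixed point for the regular solution
  obtain ⟨u, hunorm, hufix, huerr⟩ := volterra δ δ₁ hδpos hδδ₁ (c*M)
    (mul_nonneg hc0.le hM.le) (by linarith) H₁ hH₁cont hH₁lin hH₁bound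
  set U : ℝ → ℝ := fun x => 1 + ∫ s in (0:ℝ)..x, H₁ u s with hUdef
  have hUu : ∀ x ∈ Set.Icc (0:ℝ) δ, U x = u x := fun x hx => (hufix x hx).symm
  have hH₁int : ∀ x : ℝ, 0 ≤ x → x ≤ δ₁ → IntervalIntegrable (H₁ u) volume 0 x := by
    intro x h0 h1
    apply ContinuousOn.intervalIntegrable
    rw [Set.uIcc_of_le h0]
    exact (hH₁cont u).mono (Set.Icc_subset_Icc le_rfl h1)
  have hUderiv : ∀ x : ℝ, 0 < x → x ≤ δ → HasDerivAt U (H₁ u x) x := by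
    intro x h1 h2
    apply HasDerivAt.const_add
    exact ftc_deriv (H₁ u) 0 x 0 δ₁ ⟨h1, lt_of_le_of_lt h2 hδδ₁⟩
      ((hH₁cont u).mono Set.Ioo_subset_Icc_self) (hH₁int x h1.le (le_trans h2 hδδ₁.le))
  have hH₁deriv : ∀ x : ℝ, 0 < x → x ≤ δ →
      HasDerivAt (H₁ u)
        ((K x * u x * x^(2*k+4) - (∫ t in (0:ℝ)..x, K t * u t) * (((2*k+4:ℕ):ℝ) * x^(2*k+3)))
          / (x^(2*k+4))^2) x := by
    intro x h1 h2
    have hne : x^(2*k+4) ≠ 0 := pow_ne_zero _ (ne_of_gt h1)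
    have hd := (hGderiv u x h1 (lt_of_le_of_lt h2 hδδ₀)).div (hasDerivAt_pow (2*k+4) x) hne
    apply hd.congr_of_eventuallyEq
    filter_upwards [lt_mem_nhds h1] with r hr
    simp only [hH₁, if_pos hr, Pi.div_apply]
  set y₁ : ℝ → ℝ := fun x => x^(k+1+1) * U x with hy₁def
  set d₁ : ℝ → ℝ := fun x => ((k:ℝ)+2) * x^(k+1) * U x + x^(k+1+1) * H₁ u x with hd₁def
  have hy₁deriv : ∀ x ∈ Set.Ioc (0:ℝ) δ, HasDerivAt y₁ (d₁ x) x := by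
    intro x hx
    have h := (hasDerivAt_pow (k+1+1) x).mul (hUderiv x hx.1 hx.2)
    refine h.congr_deriv ?_
    simp only [hd₁def]
    push_cast
    ring
  have hODE1 : ∀ x ∈ Set.Ioc (0:ℝ) δ, HasDerivAt d₁ (c / x^2 * (1+ω x) * y₁ x) x := by
    intro x hx
    have h1 := hx.1
    have h2 := hx.2
    have hxne : x ≠ 0 := ne_of_gt h1
    have hU' := hUderiv x h1 h2
    have hA' := hH₁deriv x h1 h2
    have hder := (((hasDerivAt_pow (k+1) x).const_mul ((k:ℝ)+2)).mul hU').add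
      ((hasDerivAt_pow (k+1+1) x).mul hA')
    refine hder.congr_deriv ?_
    have hKx : K x = c * ω x * x^(2*k+2) := by simp only [hK, if_pos h1]
    have hGx : (∫ t in (0:ℝ)..x, K t * u t) = H₁ u x * x^(2*k+4) := by
      simp only [hH₁, if_pos h1]
      field_simp
    have hux : u x = U x := (hUu x ⟨h1.le, h2⟩).symm
    rw [hGx, hKx, hux]
    simp only [hy₁def]
    push_cast
    field_simp
    ring
  have hy₁bound : ∀ x ∈ Set.Ioc (0:ℝ) δ, |y₁ x / x^(k+1+1) - 1| ≤ (c*M) * x^2 := by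
    intro x hx
    have hxne : x^(k+1+1) ≠ 0 := pow_ne_zero _ (ne_of_gt hx.1)
    have : y₁ x / x^(k+1+1) = U x := by
      simp only [hy₁def]
      field_simp
    rw [this]
    rw [hUu x ⟨hx.1.le, hx.2⟩]
    exact huerr x ⟨hx.1.le, hx.2⟩
  
  -- kernel for the singular solution
  set J : ℝ → ℝ := fun t => c * ω t / t^(2*k+4) with hJ
  have hJb : ∀ t : ℝ, 0 < t → t < δ₀ → |J t| ≤ (c*M) * t^(-(2*((k+1:ℕ)):ℤ)) := by
    intro t h1 h2
    have hωt := hωb t ⟨h1, h2.le⟩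
    have habs : |J t| = c * |ω t| / t^(2*k+4) := by
      simp only [hJ]
      rw [abs_div, abs_mul, abs_of_pos hc0, abs_of_pos (pow_pos h1 _)]
    rw [habs, ← zpow_aux1 t h1 k, ← mul_div_assoc,
      div_le_div_iff₀ (pow_pos h1 _) (pow_pos h1 _)]
    have h3 : c * |ω t| ≤ c * (M * t^2) := mul_le_mul_of_nonneg_left hωt hc0.le
    have h4 : (0:ℝ) ≤ t^(2*k+4) := pow_nonneg h1.le _
    calc c * |ω t| * t^(2*k+4) ≤ c * (M*t^2) * t^(2*k+4) :=
        mul_le_mul_of_nonneg_right h3 h4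
      _ = c * M * t^(2:ℕ) * t^(2*k+4) := by ring
  have hJA : ∀ (w : BoundedContinuousFunction ℝ ℝ), ∀ t : ℝ, 0 < t → t < δ₀ →
      ContinuousAt (fun t => J t * w t) t := by
    intro w t h1 h2
    have : ContinuousAt J t := by
      simp only [hJ]
      exact (continuousAt_const.mul (hωa t h1 h2)).div
        ((continuous_pow _).continuousAt) (pow_ne_zero _ (ne_of_gt h1))
    exact this.mul w.continuous.continuousAt
  have hJint : ∀ (w : BoundedContinuousFunction ℝ ℝ) (s : ℝ), 0 < s → s ≤ δ₁ →
      IntervalIntegrable (fun t => J t * w t) volume s δ := by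
    intro w s h0 h1
    apply ContinuousOn.intervalIntegrable
    intro t ht
    have h2 : 0 < min s δ := lt_min h0 hδpos
    have h3 : max s δ ≤ δ₁ := max_le h1 hδδ₁.le
    exact (hJA w t (lt_of_lt_of_le h2 ht.1)
      (lt_of_le_of_lt (le_trans ht.2 h3) hδ₁δ₀)).continuousWithinAt
  have hG₂deriv : ∀ (w : BoundedContinuousFunction ℝ ℝ) (x : ℝ), 0 < x → x ≤ δ₁ →
      HasDerivAt (fun s => ∫ t in s..δ, J t * w t) (-(J x * w x)) x :=
    fun w x h0 h1 => ftc_deriv_left _ δ x 0 δ₀ ⟨h0, lt_of_le_of_lt h1 hδ₁δ₀⟩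
      (fun t ht => (hJA w t ht.1 ht.2).continuousWithinAt) (hJint w x h0 h1)
  have hG₂b : ∀ (w : BoundedContinuousFunction ℝ ℝ) (s : ℝ), 0 < s → s ≤ δ →
      |∫ t in s..δ, J t * w t|
        ≤ (c*M*‖w‖) * s ^ (-(2*((k+1:ℕ)):ℤ)+1) / (2*((k+1:ℕ):ℝ)-1) := by
    intro w s h0 h1
    refine ibound2 _ s δ _ (k+1) (by omega) h0 h1
      (mul_nonneg (mul_nonneg hc0.le hM.le) (norm_nonneg w))
      (hJint w s h0 (le_trans h1 hδδ₁.le)) ?_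
    intro t ht
    have ht0 : 0 < t := lt_of_lt_of_le h0 ht.1
    have htδ₀ : t < δ₀ := lt_of_le_of_lt ht.2 hδδ₀
    rw [abs_mul]
    calc |J t| * |w t| ≤ ((c*M) * t^(-(2*((k+1:ℕ)):ℤ))) * ‖w‖ :=
        mul_le_mul (hJb t ht0 htδ₀) (hwnorm w t) (abs_nonneg _)
          (mul_nonneg (mul_nonneg hc0.le hM.le) (zpow_nonneg ht0.le _))
      _ = (c*M*‖w‖) * t^(-(2*((k+1:ℕ)):ℤ)) := by ring
  have hG₂lin : ∀ (w w' : BoundedContinuousFunction ℝ ℝ) (s : ℝ), 0 < s → s ≤ δ →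
      |∫ t in s..δ, (J t * w t - J t * w' t)|
        ≤ (c*M*dist w w') * s ^ (-(2*((k+1:ℕ)):ℤ)+1) / (2*((k+1:ℕ):ℝ)-1) := by
    intro w w' s h0 h1
    refine ibound2 _ s δ _ (k+1) (by omega) h0 h1
      (mul_nonneg (mul_nonneg hc0.le hM.le) dist_nonneg)
      ((hJint w s h0 (le_trans h1 hδδ₁.le)).sub (hJint w' s h0 (le_trans h1 hδδ₁.le))) ?_
    intro t ht
    have ht0 : 0 < t := lt_of_lt_of_le h0 ht.1
    have htδ₀ : t < δ₀ := lt_of_le_of_lt ht.2 hδδ₀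
    rw [← mul_sub, abs_mul]
    calc |J t| * |w t - w' t| ≤ ((c*M) * t^(-(2*((k+1:ℕ)):ℤ))) * dist w w' :=
        mul_le_mul (hJb t ht0 htδ₀) (hwdist w w' t) (abs_nonneg _)
          (mul_nonneg (mul_nonneg hc0.le hM.le) (zpow_nonneg ht0.le _))
      _ = (c*M*dist w w') * t^(-(2*((k+1:ℕ)):ℤ)) := by ring
  -- the outer integrand for the singular solution
  set H₂ : BoundedContinuousFunction ℝ ℝ → ℝ → ℝ := fun w s =>
    if 0 < s then -(s^(2*k+2) * ∫ t in s..δ, J t * w t) else 0 with hH₂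
  have hden1 : (1:ℝ) ≤ 2*((k+1:ℕ):ℝ)-1 := by push_cast; linarith
  have hH₂b : ∀ (w : BoundedContinuousFunction ℝ ℝ) (s : ℝ), 0 < s → s ≤ δ →
      |H₂ w s| ≤ ((c*M)*‖w‖/(2*((k+1:ℕ):ℝ)-1)) * s := by
    intro w s h0 h1
    simp only [hH₂, if_pos h0]
    rw [abs_neg, abs_mul, abs_of_nonneg (pow_nonneg h0.le _)]
    have hb := hG₂b w s h0 h1
    calc s^(2*k+2) * |∫ t in s..δ, J t * w t|
        ≤ s^(2*k+2) * ((c*M*‖w‖) * s ^ (-(2*((k+1:ℕ)):ℤ)+1) / (2*((k+1:ℕ):ℝ)-1)) :=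
          mul_le_mul_of_nonneg_left hb (pow_nonneg h0.le _)
      _ = ((c*M)*‖w‖/(2*((k+1:ℕ):ℝ)-1)) * (s^(2*k+2) * s ^ (-(2*((k+1:ℕ)):ℤ)+1)) := by
          ring
      _ = ((c*M)*‖w‖/(2*((k+1:ℕ):ℝ)-1)) * s := by rw [zpow_aux2 s h0 k]
  have hH₂bound : ∀ (w : BoundedContinuousFunction ℝ ℝ), ∀ s ∈ Set.Ioc (0:ℝ) δ,
      |H₂ w s| ≤ (c*M) * ‖w‖ * s := by
    intro w s hs
    have h1 := hH₂b w s hs.1 hs.2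
    have h2 : (c*M)*‖w‖/(2*((k+1:ℕ):ℝ)-1) ≤ (c*M)*‖w‖ :=
      div_le_self (mul_nonneg (mul_nonneg hc0.le hM.le) (norm_nonneg w)) hden1
    nlinarith [hs.1.le]
  have hH₂lin : ∀ (w w' : BoundedContinuousFunction ℝ ℝ), ∀ s ∈ Set.Ioc (0:ℝ) δ,
      |H₂ w s - H₂ w' s| ≤ (c*M) * dist w w' * s := by
    intro w w' s hs
    have h0 := hs.1
    have h1 := hs.2
    have hdiff : H₂ w s - H₂ w' s
        = -(s^(2*k+2) * ∫ t in s..δ, (J t * w t - J t * w' t)) := by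
      simp only [hH₂, if_pos h0]
      rw [intervalIntegral.integral_sub (hJint w s h0 (le_trans h1 hδδ₁.le))
        (hJint w' s h0 (le_trans h1 hδδ₁.le))]
      ring
    rw [hdiff, abs_neg, abs_mul, abs_of_nonneg (pow_nonneg h0.le _)]
    have hb := hG₂lin w w' s h0 h1
    have step : s^(2*k+2) * |∫ t in s..δ, (J t * w t - J t * w' t)|
        ≤ ((c*M)*dist w w'/(2*((k+1:ℕ):ℝ)-1)) * s := by
      calc s^(2*k+2) * |∫ t in s..δ, (J t * w t - J t * w' t)|
          ≤ s^(2*k+2) * ((c*M*dist w w') * s ^ (-(2*((k+1:ℕ)):ℤ)+1) / (2*((k+1:ℕ):ℝ)-1)) :=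
            mul_le_mul_of_nonneg_left hb (pow_nonneg h0.le _)
        _ = ((c*M)*dist w w'/(2*((k+1:ℕ):ℝ)-1)) * (s^(2*k+2) * s ^ (-(2*((k+1:ℕ)):ℤ)+1)) := by
            ring
        _ = ((c*M)*dist w w'/(2*((k+1:ℕ):ℝ)-1)) * s := by rw [zpow_aux2 s h0 k]
    have h2 : (c*M)*dist w w'/(2*((k+1:ℕ):ℝ)-1) ≤ (c*M)*dist w w' :=
      div_le_self (mul_nonneg (mul_nonneg hc0.le hM.le) dist_nonneg) hden1
    nlinarith [h0.le]
  have hH₂cont : ∀ w, ContinuousOn (H₂ w) (Set.Icc 0 δ₁) := by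
    intro w s hs
    rcases eq_or_lt_of_le hs.1 with h0|h0
    · apply ContinuousAt.continuousWithinAt
      rw [← h0]
      have hH₂0 : H₂ w 0 = 0 := by simp [hH₂]
      rw [ContinuousAt, hH₂0]
      apply squeeze_zero_norm' (a := fun s => ((c*M)*‖w‖/(2*((k+1:ℕ):ℝ)-1)) * |s|)
      · filter_upwards [Iio_mem_nhds hδpos] with r hr
        rcases le_or_gt r 0 with h'|h'
        · simp only [hH₂, if_neg (not_lt.mpr h'), norm_zero]
          positivity
        · rw [Real.norm_eq_abs]
          calc |H₂ w r| ≤ ((c*M)*‖w‖/(2*((k+1:ℕ):ℝ)-1)) * r :=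
              hH₂b w r h' (Set.mem_Iio.mp hr).le
            _ = ((c*M)*‖w‖/(2*((k+1:ℕ):ℝ)-1)) * |r| := by rw [abs_of_pos h']
      · have hcont : Continuous fun r:ℝ => ((c*M)*‖w‖/(2*((k+1:ℕ):ℝ)-1)) * |r| :=
          continuous_const.mul continuous_abs
        simpa using hcont.tendsto 0
    · apply ContinuousAt.continuousWithinAt
      have hcontG := (hG₂deriv w s h0 hs.2).continuousAt
      have hq : ContinuousAt (fun r => -(r^(2*k+2) * ∫ t in r..δ, J t * w t)) s :=
        (((continuous_pow _).continuousAt).mul hcontG).neg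
      apply hq.congr
      filter_upwards [lt_mem_nhds h0] with r hr
      simp only [hH₂, if_pos hr]
  -- fixed point for the singular solution
  obtain ⟨v, hvnorm, hvfix, hverr⟩ := volterra δ δ₁ hδpos hδδ₁ (c*M)
    (mul_nonneg hc0.le hM.le) (by linarith) H₂ hH₂cont hH₂lin hH₂bound
  set W : ℝ → ℝ := fun x => 1 + ∫ s in (0:ℝ)..x, H₂ v s with hWdef
  have hWv : ∀ x ∈ Set.Icc (0:ℝ) δ, W x = v x := fun x hx => (hvfix x hx).symm
  have hH₂int : ∀ x : ℝ, 0 ≤ x → x ≤ δ₁ → IntervalIntegrable (H₂ v) volume 0 x := by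
    intro x h0 h1
    apply ContinuousOn.intervalIntegrable
    rw [Set.uIcc_of_le h0]
    exact (hH₂cont v).mono (Set.Icc_subset_Icc le_rfl h1)
  have hWderiv : ∀ x : ℝ, 0 < x → x ≤ δ → HasDerivAt W (H₂ v x) x := by
    intro x h1 h2
    apply HasDerivAt.const_add
    exact ftc_deriv (H₂ v) 0 x 0 δ₁ ⟨h1, lt_of_le_of_lt h2 hδδ₁⟩
      ((hH₂cont v).mono Set.Ioo_subset_Icc_self) (hH₂int x h1.le (le_trans h2 hδδ₁.le))
  have hH₂deriv : ∀ x : ℝ, 0 < x → x ≤ δ →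
      HasDerivAt (H₂ v)
        (-((((2*k+2:ℕ):ℝ) * x^(2*k+1)) * (∫ t in x..δ, J t * v t)
          + x^(2*k+2) * (-(J x * v x)))) x := by
    intro x h1 h2
    have hd := ((hasDerivAt_pow (2*k+2) x).mul
      (hG₂deriv v x h1 (le_trans h2 hδδ₁.le))).neg
    apply hd.congr_of_eventuallyEq
    filter_upwards [lt_mem_nhds h1] with r hr
    simp only [hH₂, if_pos hr, Pi.neg_apply, Pi.mul_apply]
  set y₂ : ℝ → ℝ := fun x => W x / x^(k+1) with hy₂def
  set d₂ : ℝ → ℝ := fun x => (H₂ v x * x - ((k:ℝ)+1) * W x) / x^(k+1+1) with hd₂def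
  have hy₂deriv : ∀ x ∈ Set.Ioc (0:ℝ) δ, HasDerivAt y₂ (d₂ x) x := by
    intro x hx
    have hxne : x ≠ 0 := ne_of_gt hx.1
    have h := (hWderiv x hx.1 hx.2).div (hasDerivAt_pow (k+1) x)
      (pow_ne_zero _ hxne)
    refine h.congr_deriv ?_
    simp only [hd₂def]
    push_cast
    field_simp
    ring
  have hODE2 : ∀ x ∈ Set.Ioc (0:ℝ) δ, HasDerivAt d₂ (c / x^2 * (1+ω x) * y₂ x) x := by
    intro x hx
    have h1 := hx.1
    have h2 := hx.2
    have hxne : x ≠ 0 := ne_of_gt h1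
    have hW' := hWderiv x h1 h2
    have hA' := hH₂deriv x h1 h2
    have hnum := (hA'.mul (hasDerivAt_id x)).sub (hW'.const_mul ((k:ℝ)+1))
    have hder := hnum.div (hasDerivAt_pow (k+1+1) x) (pow_ne_zero _ hxne)
    refine hder.congr_deriv ?_
    have hI : (∫ t in x..δ, J t * v t) = -(H₂ v x) / x^(2*k+2) := by
      simp only [hH₂, if_pos h1]
      field_simp
    have hvx : v x = W x := (hWv x ⟨h1.le, h2⟩).symm
    rw [hI, hvx]
    simp only [hy₂def, hJ, Pi.sub_apply, Pi.mul_apply, id]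
    push_cast
    field_simp
    ring
  have hy₂bound : ∀ x ∈ Set.Ioc (0:ℝ) δ, |x^(k+1) * y₂ x - 1| ≤ (c*M) * x^2 := by
    intro x hx
    have hxne : x^(k+1) ≠ 0 := pow_ne_zero _ (ne_of_gt hx.1)
    have : x^(k+1) * y₂ x = W x := by
      simp only [hy₂def]
      field_simp
    rw [this, hWv x ⟨hx.1.le, hx.2⟩]
    exact hverr x ⟨hx.1.le, hx.2⟩
  
  -- quantitative bounds used for independence
  have hUbd : ∀ x ∈ Set.Ioc (0:ℝ) δ, |U x - 1| ≤ 1/2 := by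
    intro x hx
    have h1 := huerr x ⟨hx.1.le, hx.2⟩
    have h2 : U x = u x := hUu x ⟨hx.1.le, hx.2⟩
    have h3 := mul_le_mul_of_nonneg_left (pow_le_pow_left₀ hx.1.le hx.2 2) hcM.le
    rw [h2]
    linarith
  have hWbd : ∀ x ∈ Set.Ioc (0:ℝ) δ, |W x - 1| ≤ 1/2 := by
    intro x hx
    have h1 := hverr x ⟨hx.1.le, hx.2⟩
    have h2 : W x = v x := hWv x ⟨hx.1.le, hx.2⟩
    have h3 := mul_le_mul_of_nonneg_left (pow_le_pow_left₀ hx.1.le hx.2 2) hcM.le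
    rw [h2]
    linarith
  have hUub : ∀ x ∈ Set.Ioc (0:ℝ) δ, |U x| ≤ 3/2 := by
    intro x hx
    have h := hUbd x hx
    have h2 := abs_sub_abs_le_abs_sub (U x) 1
    rw [abs_one] at h2
    linarith
  have hWlb : ∀ x ∈ Set.Ioc (0:ℝ) δ, 1/2 ≤ |W x| := by
    intro x hx
    have h := hWbd x hx
    have h2 := abs_sub_abs_le_abs_sub (1:ℝ) (W x)
    rw [abs_one, abs_sub_comm] at h2
    linarith
  have hindep : ∀ a b : ℝ, (∀ x ∈ Set.Ioc (0:ℝ) δ, a * y₁ x + b * y₂ x = 0) →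
      a = 0 ∧ b = 0 := by
    intro a b hzero
    have hkey : ∀ x ∈ Set.Ioc (0:ℝ) δ, |b| ≤ 3 * |a| * x := by
      intro x hx
      have heq := hzero x hx
      have hxne : x ≠ 0 := ne_of_gt hx.1
      have hk1 : x^(k+1) ≠ 0 := pow_ne_zero _ hxne
      simp only [hy₁def, hy₂def] at heq
      have heq2 : b * W x = -(a * (x^(2*k+3) * U x)) := by
        have e1 : b * W x = (b * (W x / x^(k+1))) * x^(k+1) := by
          field_simp
        rw [e1, show b * (W x / x^(k+1)) = -(a * (x^(k+1+1) * U x)) from by linarith]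
        ring
      have habs : |b| * |W x| = |a| * x^(2*k+3) * |U x| := by
        have := congrArg abs heq2
        rw [abs_mul, abs_neg, abs_mul, abs_mul,
          abs_of_pos (pow_pos hx.1 (2*k+3))] at this
        rw [this]
        ring
      have s1 : |b| * (1/2) ≤ |b| * |W x| :=
        mul_le_mul_of_nonneg_left (hWlb x hx) (abs_nonneg b)
      have s2 : |a| * x^(2*k+3) * |U x| ≤ |a| * x^(2*k+3) * (3/2) :=
        mul_le_mul_of_nonneg_left (hUub x hx)
          (mul_nonneg (abs_nonneg a) (pow_nonneg hx.1.le _))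
      have s3 : |a| * x^(2*k+3) * (3/2) ≤ |a| * x * (3/2) := by
        have hp := pow_le_pow_of_le_one hx.1.le (le_trans hx.2 hδ1)
          (show 1 ≤ 2*k+3 by omega)
        rw [pow_one] at hp
        nlinarith [abs_nonneg a]
      linarith
    have hbz : b = 0 := by
      by_contra hb
      rcases eq_or_ne a 0 with ha|ha
      · have h1 := hkey δ ⟨hδpos, le_rfl⟩
        rw [ha, abs_zero] at h1
        simp only [mul_zero, zero_mul] at h1
        exact hb (abs_eq_zero.mp (le_antisymm h1 (abs_nonneg b)))
      · have hab : 0 < |a| := abs_pos.mpr ha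
        have hbb : 0 < |b| := abs_pos.mpr hb
        set x₀ := min δ (|b|/(6*|a|)) with hx₀
        have hx₀pos : 0 < x₀ := lt_min hδpos (div_pos hbb (by linarith))
        have h1 := hkey x₀ ⟨hx₀pos, min_le_left _ _⟩
        have h2 : 3 * |a| * x₀ ≤ 3 * |a| * (|b|/(6*|a|)) :=
          mul_le_mul_of_nonneg_left (min_le_right _ _) (by positivity)
        have h3 : 3 * |a| * (|b|/(6*|a|)) = |b|/2 := by
          field_simp
          ring
        linarith
    refine ⟨?_, hbz⟩
    have heq := hzero δ ⟨hδpos, le_rfl⟩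
    rw [hbz] at heq
    have heq' : a * y₁ δ = 0 := by linarith [heq]
    have hyδ : y₁ δ ≠ 0 := by
      simp only [hy₁def]
      apply mul_ne_zero (pow_ne_zero _ (ne_of_gt hδpos))
      intro h0
      have := hUbd δ ⟨hδpos, le_rfl⟩
      rw [h0] at this
      rw [show |(0:ℝ) - 1| = 1 by norm_num] at this
      linarith
    rcases mul_eq_zero.mp heq' with h|h
    · exact h
    · exact absurd h hyδ
  refine ⟨δ, ⟨hδpos, hδδ₀.le⟩, c*M, hcM, y₁, y₂, d₁, d₂, hy₁deriv, ?_, hy₂deriv, ?_,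
    hy₁bound, hy₂bound, hindep⟩
  · intro x hx
    have h := hODE1 x hx
    rwa [← hcast] at h
  · intro x hx
    have h := hODE2 x hx
    rwa [← hcast] at h
end
end

section
/- Let l ≥ 1 be an integer, δ > 0, and let ω : (0,δ] → ℝ be continuous with |ω(x)| ≤ M x² for all x ∈ (0,δ]. Then the set of solutions y : (0,δ] → ℝ of the ordinary differential equation y''(x) = (l(l+1)/x²)(1 + ω(x)) y(x) that satisfy ∫_0^δ |y(x)|² dx < ∞ forms a real vector space of dimension at most one. (Consequently the eigenvalues of the operator 𝒩_{l00} are simple for l ≥ 1.) -/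
open MeasureTheory Real Filter

set_option maxHeartbeats 4000000

noncomputable section

private lemma deriv_le_aux {H h : ℝ → ℝ} {a b : ℝ} (hab : a ≤ b)
    (hH : ∀ t ∈ Set.Icc a b, HasDerivAt H (h t) t)
    (hle : ∀ t ∈ Set.Icc a b, h t ≤ 0) : H b ≤ H a := by
  rcases eq_or_lt_of_le hab with rfl | hlt
  · exact le_rfl
  obtain ⟨ξ, hξ, heq⟩ := exists_hasDerivAt_eq_slope H h hlt
    (fun t ht => (hH t ht).continuousAt.continuousWithinAt)
    (fun t ht => hH t ⟨ht.1.le, ht.2.le⟩)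
  have h1 : h ξ ≤ 0 := hle ξ ⟨hξ.1.le, hξ.2.le⟩
  have h2 : H b - H a = h ξ * (b - a) := by
    rw [heq, div_mul_cancel₀ _ (sub_ne_zero.mpr hlt.ne')]
  nlinarith [sub_pos.mpr hlt]

private lemma deriv_ge_aux {H h : ℝ → ℝ} {a b : ℝ} (hab : a ≤ b)
    (hH : ∀ t ∈ Set.Icc a b, HasDerivAt H (h t) t)
    (hge : ∀ t ∈ Set.Icc a b, 0 ≤ h t) : H a ≤ H b := by
  have := deriv_le_aux (H := fun t => -H t) (h := fun t => -h t) hab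
    (fun t ht => (hH t ht).neg) (fun t ht => neg_nonpos.mpr (hge t ht))
  simpa using this

private lemma deriv_eq_aux {H h : ℝ → ℝ} {a b : ℝ} (hab : a ≤ b)
    (hH : ∀ t ∈ Set.Icc a b, HasDerivAt H (h t) t)
    (h0 : ∀ t ∈ Set.Icc a b, h t = 0) : H b = H a :=
  le_antisymm (deriv_le_aux hab hH fun t ht => (h0 t ht).le)
    (deriv_ge_aux hab hH fun t ht => (h0 t ht).ge)

/-- the square-integrable solutions of the Liouville normal form
`y'' = (l(l+1)/x²)(1+ω(x))y` near `x = 0` form a space of dimension at most one: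
any two of them are linearly dependent. -/
theorem statement_16 (l : ℕ) (hl : 1 ≤ l) (δ M : ℝ) (hδ : 0 < δ)
    (ω : ℝ → ℝ) (hω : ContinuousOn ω (Set.Ioc 0 δ))
    (hωb : ∀ x ∈ Set.Ioc (0 : ℝ) δ, |ω x| ≤ M * x ^ 2)
    (y z dy dz : ℝ → ℝ)
    (hy : ∀ x ∈ Set.Ioc (0 : ℝ) δ, HasDerivAt y (dy x) x)
    (hy' : ∀ x ∈ Set.Ioc (0 : ℝ) δ,
      HasDerivAt dy (((l * (l + 1) : ℕ) : ℝ) / x ^ 2 * (1 + ω x) * y x) x)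
    (hz : ∀ x ∈ Set.Ioc (0 : ℝ) δ, HasDerivAt z (dz x) x)
    (hz' : ∀ x ∈ Set.Ioc (0 : ℝ) δ,
      HasDerivAt dz (((l * (l + 1) : ℕ) : ℝ) / x ^ 2 * (1 + ω x) * z x) x)
    (hyL2 : IntegrableOn (fun x => y x ^ 2) (Set.Ioo 0 δ))
    (hzL2 : IntegrableOn (fun x => z x ^ 2) (Set.Ioo 0 δ)) :
    ∃ a b : ℝ, ¬(a = 0 ∧ b = 0) ∧
      ∀ x ∈ Set.Ioc (0 : ℝ) δ, a * y x + b * z x = 0 := by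
  -- abbreviation for the potential
  set Q : ℝ → ℝ := fun x => ((l * (l + 1) : ℕ) : ℝ) / x ^ 2 * (1 + ω x) with hQdef
  have hy2 : ∀ x ∈ Set.Ioc (0 : ℝ) δ, HasDerivAt dy (Q x * y x) x := hy'
  have hz2 : ∀ x ∈ Set.Ioc (0 : ℝ) δ, HasDerivAt dz (Q x * z x) x := hz'
  have hl2 : (2 : ℝ) ≤ ((l * (l + 1) : ℕ) : ℝ) := by
    have h2 : 2 ≤ l * (l + 1) := le_trans (show 2 ≤ 1*(1+1) by norm_num) (Nat.mul_le_mul hl (by omega))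
    exact_mod_cast h2
  have hQcont : ContinuousOn Q (Set.Ioc 0 δ) := by
    apply ContinuousOn.mul
    · exact ContinuousOn.div continuousOn_const (continuous_pow 2).continuousOn
        (fun x hx => pow_ne_zero 2 (ne_of_gt hx.1))
    · exact continuousOn_const.add hω
  -- scale on which the potential is strongly positive
  set M' : ℝ := max M 1 with hM'def
  have hM' : (0 : ℝ) < M' := lt_of_lt_of_le one_pos (le_max_right _ _)
  set δ' : ℝ := min δ (Real.sqrt (1 / (2 * M'))) with hδ'def
  have hδ'pos : 0 < δ' := lt_min hδ (Real.sqrt_pos.mpr (by positivity))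
  have hδ'δ : δ' ≤ δ := min_le_left _ _
  have hsub : Set.Ioc (0:ℝ) δ' ⊆ Set.Ioc (0:ℝ) δ :=
    Set.Ioc_subset_Ioc le_rfl hδ'δ
  have hδ'mem : δ' ∈ Set.Ioc (0:ℝ) δ := ⟨hδ'pos, hδ'δ⟩
  have hQ1 : ∀ x ∈ Set.Ioc (0:ℝ) δ', 1 ≤ x ^ 2 * Q x := by
    intro x hx
    have hx0 : 0 < x := hx.1
    have hb := hωb x (hsub hx)
    have hxM : M * x ^ 2 ≤ M' * x ^ 2 :=
      mul_le_mul_of_nonneg_right (le_max_left _ _) (sq_nonneg x)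
    have hx2 : x ^ 2 ≤ 1 / (2 * M') := by
      have hxs : x ≤ Real.sqrt (1 / (2 * M')) := le_trans hx.2 (min_le_right _ _)
      have hsq := Real.sq_sqrt (le_of_lt (show (0:ℝ) < 1 / (2 * M') by positivity))
      nlinarith [Real.sqrt_nonneg (1 / (2 * M'))]
    have hM'x : M' * x ^ 2 ≤ 1 / 2 := by
      have := mul_le_mul_of_nonneg_left hx2 hM'.le
      calc M' * x ^ 2 ≤ M' * (1 / (2 * M')) := this
        _ = 1 / 2 := by field_simp
    have habs := abs_le.mp (le_trans hb (le_trans hxM hM'x))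
    have hωlb : -(1/2 : ℝ) ≤ ω x := habs.1
    have : x ^ 2 * Q x = ((l * (l + 1) : ℕ) : ℝ) * (1 + ω x) := by
      rw [hQdef]; field_simp
    rw [this]
    nlinarith
  have hQpos : ∀ x ∈ Set.Ioc (0:ℝ) δ', 0 < Q x := by
    intro x hx
    nlinarith [hQ1 x hx, pow_pos hx.1 2]
  -- the Wronskian is constant
  have hW : ∀ x ∈ Set.Ioc (0:ℝ) δ,
      HasDerivAt (fun t => y t * dz t - z t * dy t) 0 x := by
    intro x hx
    have H := ((hy x hx).mul (hz2 x hx)).sub ((hz x hx).mul (hy2 x hx))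
    refine H.congr_deriv ?_; ring
  set c : ℝ := y δ * dz δ - z δ * dy δ with hcdef
  have hWc : ∀ x ∈ Set.Ioc (0:ℝ) δ, y x * dz x - z x * dy x = c := by
    intro x hx
    have hIcc : Set.Icc x δ ⊆ Set.Ioc (0:ℝ) δ :=
      fun t ht => ⟨lt_of_lt_of_le hx.1 ht.1, ht.2⟩
    exact (deriv_eq_aux hx.2 (fun t ht => hW t (hIcc ht)) (fun t _ => rfl)).symm
  -- derivative data for u = y² + z²
  have hU1 : ∀ x ∈ Set.Ioc (0:ℝ) δ,
      HasDerivAt (fun t => y t ^ 2 + z t ^ 2) (2 * (y x * dy x + z x * dz x)) x := by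
    intro x hx
    have H := ((hy x hx).pow 2).add ((hz x hx).pow 2)
    refine H.congr_deriv ?_; ring
  have hU2 : ∀ x ∈ Set.Ioc (0:ℝ) δ,
      HasDerivAt (fun t => 2 * (y t * dy t + z t * dz t))
        (2 * (dy x ^ 2 + dz x ^ 2) + 2 * Q x * (y x ^ 2 + z x ^ 2)) x := by
    intro x hx
    have H := (((hy x hx).mul (hy2 x hx)).add ((hz x hx).mul (hz2 x hx))).const_mul 2
    refine H.congr_deriv ?_; ring
  -- the Wronskian vanishes
  have hc0 : c = 0 := by
    by_contra hc
    have hupos : ∀ x ∈ Set.Ioc (0:ℝ) δ, 0 < y x ^ 2 + z x ^ 2 := by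
      intro x hx
      rcases lt_or_eq_of_le (by positivity : (0:ℝ) ≤ y x ^ 2 + z x ^ 2) with h | h
      · exact h
      · exfalso
        have hy0 : y x = 0 := by nlinarith [sq_nonneg (y x), sq_nonneg (z x)]
        have hz0 : z x = 0 := by nlinarith [sq_nonneg (y x), sq_nonneg (z x)]
        exact hc (by rw [← hWc x hx, hy0, hz0]; ring)
    have hc2 : 0 < c ^ 2 := lt_of_le_of_ne (sq_nonneg c) (Ne.symm (pow_ne_zero 2 hc))
    have hCS : ∀ x ∈ Set.Ioc (0:ℝ) δ,
        c ^ 2 ≤ (y x ^ 2 + z x ^ 2) * (dy x ^ 2 + dz x ^ 2) := by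
      intro x hx
      rw [← hWc x hx]
      nlinarith [sq_nonneg (y x * dy x + z x * dz x)]
    set w : ℝ → ℝ := fun t => t ^ 2 * (2 * (y t * dy t + z t * dz t))
        - 2 * t * (y t ^ 2 + z t ^ 2) with hwdef
    have hwD : ∀ x ∈ Set.Ioc (0:ℝ) δ,
        HasDerivAt w
          (x ^ 2 * (2 * (dy x ^ 2 + dz x ^ 2) + 2 * Q x * (y x ^ 2 + z x ^ 2))
            - 2 * (y x ^ 2 + z x ^ 2)) x := by
      intro x hx
      have H := ((hasDerivAt_pow 2 x).mul (hU2 x hx)).sub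
        ((hasDerivAt_id' x).const_mul 2 |>.mul (hU1 x hx))
      refine H.congr_deriv ?_; push_cast; ring
    have hw'nonneg : ∀ x ∈ Set.Ioc (0:ℝ) δ',
        0 ≤ x ^ 2 * (2 * (dy x ^ 2 + dz x ^ 2) + 2 * Q x * (y x ^ 2 + z x ^ 2))
            - 2 * (y x ^ 2 + z x ^ 2) := by
      intro x hx
      have h1 := hQ1 x hx
      have h2 : (0:ℝ) ≤ y x ^ 2 + z x ^ 2 := by positivity
      nlinarith [mul_le_mul_of_nonneg_right h1 h2,
        mul_nonneg (sq_nonneg x) (by positivity : (0:ℝ) ≤ dy x ^ 2 + dz x ^ 2)]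
    have hwmono : ∀ s t : ℝ, s ∈ Set.Ioc (0:ℝ) δ' → t ∈ Set.Ioc (0:ℝ) δ' → s ≤ t →
        w s ≤ w t := by
      intro s t hs ht hst
      have hIcc : Set.Icc s t ⊆ Set.Ioc (0:ℝ) δ' :=
        fun r hr => ⟨lt_of_lt_of_le hs.1 hr.1, le_trans hr.2 ht.2⟩
      exact deriv_ge_aux hst (fun r hr => hwD r (hsub (hIcc hr)))
        (fun r hr => hw'nonneg r (hIcc hr))
    by_cases hcase : ∀ x ∈ Set.Ioc (0:ℝ) δ', 0 ≤ w x
    · -- Case u ≤ C x² : logarithmic blow-up contradiction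
      have hgD : ∀ x ∈ Set.Ioc (0:ℝ) δ,
          HasDerivAt (fun t => (y t ^ 2 + z t ^ 2) / t ^ 2) (w x / (x ^ 2) ^ 2) x := by
        intro x hx
        have H := (hU1 x hx).div (hasDerivAt_pow 2 x) (pow_ne_zero 2 (ne_of_gt hx.1))
        refine H.congr_deriv ?_
        simp only [hwdef]
        push_cast
        ring
      have hgmono : ∀ x ∈ Set.Ioc (0:ℝ) δ',
          (y x ^ 2 + z x ^ 2) / x ^ 2 ≤ (y δ' ^ 2 + z δ' ^ 2) / δ' ^ 2 := by
        intro x hx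
        have hIcc : Set.Icc x δ' ⊆ Set.Ioc (0:ℝ) δ' :=
          fun r hr => ⟨lt_of_lt_of_le hx.1 hr.1, hr.2⟩
        exact deriv_ge_aux hx.2 (fun r hr => hgD r (hsub (hIcc hr)))
          (fun r hr => div_nonneg (hcase r (hIcc hr)) (by positivity))
      set C : ℝ := (y δ' ^ 2 + z δ' ^ 2) / δ' ^ 2 with hCdef
      have hCpos : 0 < C := div_pos (hupos δ' hδ'mem) (by positivity)
      have huub : ∀ x ∈ Set.Ioc (0:ℝ) δ', y x ^ 2 + z x ^ 2 ≤ C * x ^ 2 := by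
        intro x hx
        have h := hgmono x hx
        rw [div_le_iff₀ (pow_pos hx.1 2)] at h
        exact h
      set K : ℝ := 2 * c ^ 2 / C with hKdef
      have hKpos : 0 < K := by positivity
      have hU2lb : ∀ x ∈ Set.Ioc (0:ℝ) δ',
          K / x ^ 2 ≤ 2 * (dy x ^ 2 + dz x ^ 2) + 2 * Q x * (y x ^ 2 + z x ^ 2) := by
        intro x hx
        have hA : c ^ 2 ≤ C * x ^ 2 * (dy x ^ 2 + dz x ^ 2) := by
          calc c ^ 2 ≤ (y x ^ 2 + z x ^ 2) * (dy x ^ 2 + dz x ^ 2) := hCS x (hsub hx)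
            _ ≤ C * x ^ 2 * (dy x ^ 2 + dz x ^ 2) :=
              mul_le_mul_of_nonneg_right (huub x hx) (by positivity)
        have hQu : 0 ≤ 2 * Q x * (y x ^ 2 + z x ^ 2) :=
          mul_nonneg (mul_nonneg (by norm_num) (hQpos x hx).le) (by positivity)
        have hmain : K / x ^ 2 ≤ 2 * (dy x ^ 2 + dz x ^ 2) := by
          rw [hKdef, div_le_iff₀ (pow_pos hx.1 2), div_le_iff₀ hCpos]
          nlinarith [hA]
        linarith
      have hψD : ∀ x ∈ Set.Ioc (0:ℝ) δ,
          HasDerivAt (fun t => (y t ^ 2 + z t ^ 2) + K * Real.log t)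
            (2 * (y x * dy x + z x * dz x) + K * x⁻¹) x := by
        intro x hx
        exact (hU1 x hx).add ((Real.hasDerivAt_log (ne_of_gt hx.1)).const_mul K)
      have hψdD : ∀ x ∈ Set.Ioc (0:ℝ) δ,
          HasDerivAt (fun t => 2 * (y t * dy t + z t * dz t) + K * t⁻¹)
            ((2 * (dy x ^ 2 + dz x ^ 2) + 2 * Q x * (y x ^ 2 + z x ^ 2)) - K / x ^ 2) x := by
        intro x hx
        have H := (hU2 x hx).add ((hasDerivAt_inv (ne_of_gt hx.1)).const_mul K)
        refine H.congr_deriv ?_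
        have hx0 : x ≠ 0 := ne_of_gt hx.1
        field_simp
        ring
      have hψdmono : ∀ s t : ℝ, s ∈ Set.Ioc (0:ℝ) δ' → t ∈ Set.Ioc (0:ℝ) δ' → s ≤ t →
          2 * (y s * dy s + z s * dz s) + K * s⁻¹ ≤
            2 * (y t * dy t + z t * dz t) + K * t⁻¹ := by
        intro s t hs ht hst
        have hIcc : Set.Icc s t ⊆ Set.Ioc (0:ℝ) δ' :=
          fun r hr => ⟨lt_of_lt_of_le hs.1 hr.1, le_trans hr.2 ht.2⟩
        exact deriv_ge_aux hst (fun r hr => hψdD r (hsub (hIcc hr)))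
          (fun r hr => sub_nonneg.mpr (hU2lb r (hIcc hr)))
      set mx : ℝ := max 0 (2 * (y δ' * dy δ' + z δ' * dz δ') + K * δ'⁻¹) with hmxdef
      have hψlb : ∀ x ∈ Set.Ioc (0:ℝ) δ',
          (y δ' ^ 2 + z δ' ^ 2) + K * Real.log δ' - mx * δ' ≤
            (y x ^ 2 + z x ^ 2) + K * Real.log x := by
        intro x hx
        rcases eq_or_lt_of_le hx.2 with heq | hlt
        · rw [heq]
          have h0 : 0 ≤ mx * δ' := mul_nonneg (le_max_left _ _) hδ'pos.le
          linarith
        · obtain ⟨ξ, hξ, heq⟩ := exists_hasDerivAt_eq_slope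
            (fun t => (y t ^ 2 + z t ^ 2) + K * Real.log t)
            (fun t => 2 * (y t * dy t + z t * dz t) + K * t⁻¹) hlt
            (fun t ht => (hψD t (hsub ⟨lt_of_lt_of_le hx.1 ht.1, ht.2⟩)).continuousAt.continuousWithinAt)
            (fun t ht => hψD t (hsub ⟨lt_trans hx.1 ht.1, ht.2.le⟩))
          have hs : ((y δ' ^ 2 + z δ' ^ 2) + K * Real.log δ')
              - ((y x ^ 2 + z x ^ 2) + K * Real.log x)
              = (2 * (y ξ * dy ξ + z ξ * dz ξ) + K * ξ⁻¹) * (δ' - x) := by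
            rw [heq, div_mul_cancel₀ _ (sub_ne_zero.mpr hlt.ne')]
          have hξmem : ξ ∈ Set.Ioc (0:ℝ) δ' := ⟨lt_trans hx.1 hξ.1, hξ.2.le⟩
          have hmono := hψdmono ξ δ' hξmem ⟨hδ'pos, le_rfl⟩ hξ.2.le
          have hmax : 2 * (y δ' * dy δ' + z δ' * dz δ') + K * δ'⁻¹ ≤ mx := le_max_right _ _
          have h1 : (2 * (y ξ * dy ξ + z ξ * dz ξ) + K * ξ⁻¹) * (δ' - x) ≤ mx * δ' :=
            calc (2 * (y ξ * dy ξ + z ξ * dz ξ) + K * ξ⁻¹) * (δ' - x)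
                ≤ mx * (δ' - x) :=
                  mul_le_mul_of_nonneg_right (hmono.trans hmax) (by linarith [hξ.2, hξ.1, hx.1])
              _ ≤ mx * δ' := mul_le_mul_of_nonneg_left (by linarith [hx.1]) (le_max_left _ _)
          linarith
      set x1 : ℝ := min δ' (Real.exp
        (((y δ' ^ 2 + z δ' ^ 2) + K * Real.log δ' - mx * δ' - C * δ' ^ 2 - 1) / K)) with hx1def
      have hx1pos : 0 < x1 := lt_min hδ'pos (Real.exp_pos _)
      have hx1mem : x1 ∈ Set.Ioc (0:ℝ) δ' := ⟨hx1pos, min_le_left _ _⟩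
      have hlog : Real.log x1 ≤
          ((y δ' ^ 2 + z δ' ^ 2) + K * Real.log δ' - mx * δ' - C * δ' ^ 2 - 1) / K :=
        (Real.log_le_iff_le_exp hx1pos).mpr (min_le_right _ _)
      have hKlog : K * Real.log x1 ≤
          (y δ' ^ 2 + z δ' ^ 2) + K * Real.log δ' - mx * δ' - C * δ' ^ 2 - 1 := by
        have := (le_div_iff₀ hKpos).mp hlog
        linarith [this]
      have h1 := hψlb x1 hx1mem
      have h2 := huub x1 hx1mem
      have h3 : C * x1 ^ 2 ≤ C * δ' ^ 2 :=
        mul_le_mul_of_nonneg_left (pow_le_pow_left₀ hx1pos.le hx1mem.2 2) hCpos.le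
      linarith
    · -- Case w is somewhere negative : u ≥ c₁/(6x), not integrable
      push_neg at hcase
      obtain ⟨a0, ha0, hwa0⟩ := hcase
      set c₁ : ℝ := -w a0 with hc₁def
      have hc₁pos : 0 < c₁ := by simp only [hc₁def]; linarith
      have hwc₁ : ∀ r ∈ Set.Ioc (0:ℝ) a0, w r + c₁ ≤ 0 := by
        intro r hr
        have hwr : w r ≤ w a0 := hwmono r a0 (Set.Ioc_subset_Ioc le_rfl ha0.2 hr) ha0 hr.2
        simp only [hc₁def]; linarith
      clear_value c₁
      have hhD : ∀ x ∈ Set.Ioc (0:ℝ) δ,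
          HasDerivAt (fun t => (y t ^ 2 + z t ^ 2) / t ^ 2 - c₁ / 3 * (t ^ 3)⁻¹)
            ((w x + c₁) / x ^ 4) x := by
        intro x hx
        have hx0 : x ≠ 0 := ne_of_gt hx.1
        have H := ((hU1 x hx).div (hasDerivAt_pow 2 x) (pow_ne_zero 2 hx0)).sub
          (((hasDerivAt_pow 3 x).inv (pow_ne_zero 3 hx0)).const_mul (c₁ / 3))
        refine H.congr_deriv ?_
        simp only [hwdef]
        push_cast
        field_simp
        ring
      have hsubδ' : Set.Ioc (0:ℝ) a0 ⊆ Set.Ioc (0:ℝ) δ' := Set.Ioc_subset_Ioc le_rfl ha0.2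
      have hhmono : ∀ x ∈ Set.Ioc (0:ℝ) a0,
          (y a0 ^ 2 + z a0 ^ 2) / a0 ^ 2 - c₁ / 3 * (a0 ^ 3)⁻¹ ≤
            (y x ^ 2 + z x ^ 2) / x ^ 2 - c₁ / 3 * (x ^ 3)⁻¹ := by
        intro x hx
        have hIcc : Set.Icc x a0 ⊆ Set.Ioc (0:ℝ) a0 :=
          fun r hr => ⟨lt_of_lt_of_le hx.1 hr.1, hr.2⟩
        apply deriv_le_aux hx.2 (fun r hr => hhD r (hsub (hsubδ' (hIcc hr))))
        intro r hr
        have hrmem := hIcc hr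
        exact div_nonpos_of_nonpos_of_nonneg (hwc₁ r hrmem) (by positivity)
      set B1 : ℝ := (y a0 ^ 2 + z a0 ^ 2) / a0 ^ 2 - c₁ / 3 * (a0 ^ 3)⁻¹ with hB1def
      set B2 : ℝ := max 0 (-B1) with hB2def
      have hB2 : 0 ≤ B2 := le_max_left _ _
      have hB1B2 : -B2 ≤ B1 := by
        have := le_max_right 0 (-B1); simp only [hB2def]; linarith
      clear_value B1 B2
      set r0 : ℝ := min 1 (c₁ / (6 * (B2 + 1))) with hr0def
      have hr0pos : 0 < r0 := lt_min one_pos (by positivity)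
      have hr0le1 : r0 ≤ 1 := min_le_left _ _
      have hr0le : r0 ≤ c₁ / (6 * (B2 + 1)) := min_le_right _ _
      clear_value r0
      set ε : ℝ := min a0 r0 with hεdef
      have hεpos : 0 < ε := lt_min ha0.1 hr0pos
      have hεa0 : ε ≤ a0 := min_le_left _ _
      have hεr0 : ε ≤ r0 := min_le_right _ _
      clear_value ε
      have hεδ : ε ≤ δ := le_trans hεa0 (le_trans ha0.2 hδ'δ)
      have hlow : ∀ x ∈ Set.Ioo (0:ℝ) ε, c₁ / 6 * x⁻¹ ≤ y x ^ 2 + z x ^ 2 := by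
        intro x hx
        have hx0 : 0 < x := hx.1
        have hxa0 : x ∈ Set.Ioc (0:ℝ) a0 := ⟨hx0, le_trans hx.2.le hεa0⟩
        have hmono := hhmono x hxa0
        have hxne : x ≠ 0 := ne_of_gt hx0
        have hux : B1 * x ^ 2 + c₁ / 3 * x⁻¹ ≤ y x ^ 2 + z x ^ 2 := by
          have h2 := mul_le_mul_of_nonneg_right hmono (le_of_lt (pow_pos hx0 2))
          have h3 : ((y x ^ 2 + z x ^ 2) / x ^ 2 - c₁ / 3 * (x ^ 3)⁻¹) * x ^ 2
              = (y x ^ 2 + z x ^ 2) - c₁ / 3 * x⁻¹ := by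
            field_simp
          rw [h3] at h2
          linarith
        have hx3 : x ^ 3 ≤ r0 := by
          have hxr : x ≤ r0 := le_trans hx.2.le hεr0
          calc x ^ 3 ≤ r0 ^ 3 := pow_le_pow_left₀ hx0.le hxr 3
            _ ≤ r0 := by
              nlinarith [mul_nonneg (sub_nonneg.mpr hr0le1) hr0pos.le,
                mul_nonneg (mul_nonneg (sub_nonneg.mpr hr0le1) hr0pos.le) hr0pos.le]
        have hB2x3 : B2 * x ^ 3 ≤ c₁ / 6 := by
          have h1 : B2 * x ^ 3 ≤ (B2 + 1) * x ^ 3 := by nlinarith [pow_pos hx0 3]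
          have h2 : (B2 + 1) * x ^ 3 ≤ (B2 + 1) * (c₁ / (6 * (B2 + 1))) :=
            mul_le_mul_of_nonneg_left (le_trans hx3 hr0le) (by positivity)
          have h3 : (B2 + 1) * (c₁ / (6 * (B2 + 1))) = c₁ / 6 := by
            field_simp
          linarith
        have hB2x2 : B2 * x ^ 2 ≤ c₁ / 6 * x⁻¹ := by
          have h1 := mul_le_mul_of_nonneg_right hB2x3 (inv_nonneg.mpr hx0.le)
          have e1 : B2 * x ^ 3 * x⁻¹ = B2 * x ^ 2 := by
            field_simp
          rw [e1] at h1
          exact h1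
        have hB1x2 : -(c₁ / 6 * x⁻¹) ≤ B1 * x ^ 2 := by
          have h4 := mul_le_mul_of_nonneg_right hB1B2 (le_of_lt (pow_pos hx0 2))
          have h5 : -B2 * x ^ 2 ≤ B1 * x ^ 2 := h4
          nlinarith [hB2x2, h5]
        linarith
      have huint : IntegrableOn (fun x => y x ^ 2 + z x ^ 2) (Set.Ioo (0:ℝ) δ) :=
        hyL2.add hzL2
      have huint' : IntegrableOn (fun x => y x ^ 2 + z x ^ 2) (Set.Ioo (0:ℝ) ε) :=
        huint.mono_set (Set.Ioo_subset_Ioo le_rfl hεδ)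
      have hinv : IntegrableOn (fun x : ℝ => x⁻¹) (Set.Ioo (0:ℝ) ε) := by
        apply Integrable.mono' (huint'.const_mul (6 / c₁))
        · exact measurable_inv.aestronglyMeasurable
        · filter_upwards [ae_restrict_mem measurableSet_Ioo] with x hx
          rw [Real.norm_eq_abs, abs_of_nonneg (inv_nonneg.mpr hx.1.le)]
          have hlo := hlow x hx
          have h2 := mul_le_mul_of_nonneg_left hlo (by positivity : (0:ℝ) ≤ 6 / c₁)
          have h3 : 6 / c₁ * (c₁ / 6 * x⁻¹) = x⁻¹ := by
            field_simp
          linarith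
      have hrpow : IntegrableOn (fun x : ℝ => x ^ (-1 : ℝ)) (Set.Ioo (0:ℝ) ε) := by
        apply hinv.congr_fun _ measurableSet_Ioo
        intro x hx
        exact (Real.rpow_neg_one x).symm
      have := (intervalIntegral.integrableOn_Ioo_rpow_iff hεpos).mp hrpow
      linarith
  have hWzero : ∀ x ∈ Set.Ioc (0:ℝ) δ, y x * dz x - z x * dy x = 0 := by
    intro x hx; rw [hWc x hx, hc0]
  by_cases hy0 : ∀ x ∈ Set.Ioc (0:ℝ) δ, y x = 0
  · exact ⟨1, 0, by simp, fun x hx => by rw [hy0 x hx]; ring⟩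
  push_neg at hy0
  obtain ⟨x0, hx0, hyx0⟩ := hy0
  refine ⟨z x0, -y x0, ?_, ?_⟩
  · rintro ⟨-, hb⟩; exact hyx0 (by linarith [neg_eq_zero.mp hb])
  intro x hx
  have hvD : ∀ t ∈ Set.Ioc (0:ℝ) δ,
      HasDerivAt (fun s => z x0 * y s - y x0 * z s) (z x0 * dy t - y x0 * dz t) t :=
    fun t ht => ((hy t ht).const_mul _).sub ((hz t ht).const_mul _)
  have hdvD : ∀ t ∈ Set.Ioc (0:ℝ) δ,
      HasDerivAt (fun s => z x0 * dy s - y x0 * dz s)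
        (Q t * (z x0 * y t - y x0 * z t)) t := by
    intro t ht
    have H := ((hy2 t ht).const_mul (z x0)).sub ((hz2 t ht).const_mul (y x0))
    refine H.congr_deriv ?_; ring
  have hv0 : z x0 * y x0 - y x0 * z x0 = 0 := by ring
  have hdv0 : z x0 * dy x0 - y x0 * dz x0 = 0 := by
    have := hWzero x0 hx0; linarith
  have hFD : ∀ t ∈ Set.Ioc (0:ℝ) δ,
      HasDerivAt (fun s => (z x0 * y s - y x0 * z s) ^ 2 + (z x0 * dy s - y x0 * dz s) ^ 2)
        (2 * (z x0 * y t - y x0 * z t) * (z x0 * dy t - y x0 * dz t) * (1 + Q t)) t := by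
    intro t ht
    have H := ((hvD t ht).pow 2).add ((hdvD t ht).pow 2)
    refine H.congr_deriv ?_; push_cast; ring
  set s0 : ℝ := min x x0 with hs0def
  have hs0pos : 0 < s0 := lt_min hx.1 hx0.1
  have hs0x : s0 ≤ x := min_le_left _ _
  have hs0x0 : s0 ≤ x0 := min_le_right _ _
  clear_value s0
  have hs0δ : Set.Icc s0 δ ⊆ Set.Ioc (0:ℝ) δ :=
    fun t ht => ⟨lt_of_lt_of_le hs0pos ht.1, ht.2⟩
  obtain ⟨Qb, hQb⟩ := (isCompact_Icc : IsCompact (Set.Icc s0 δ)).exists_bound_of_continuousOn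
    (hQcont.mono hs0δ)
  have hQb0 : 0 ≤ Qb :=
    le_trans (norm_nonneg _) (hQb δ ⟨le_trans hs0x hx.2, le_rfl⟩)
  have hKpos : (0:ℝ) < 1 + Qb := by linarith
  have hFbound : ∀ t ∈ Set.Icc s0 δ,
      |2 * (z x0 * y t - y x0 * z t) * (z x0 * dy t - y x0 * dz t) * (1 + Q t)|
        ≤ (1 + Qb) * ((z x0 * y t - y x0 * z t) ^ 2 + (z x0 * dy t - y x0 * dz t) ^ 2) := by
    intro t ht
    have h1 : |2 * (z x0 * y t - y x0 * z t) * (z x0 * dy t - y x0 * dz t)|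
        ≤ (z x0 * y t - y x0 * z t) ^ 2 + (z x0 * dy t - y x0 * dz t) ^ 2 := by
      apply abs_le.mpr
      constructor
      · nlinarith [sq_nonneg (z x0 * y t - y x0 * z t + (z x0 * dy t - y x0 * dz t))]
      · nlinarith [sq_nonneg (z x0 * y t - y x0 * z t - (z x0 * dy t - y x0 * dz t))]
    have h2 : |1 + Q t| ≤ 1 + Qb := by
      have h3 := hQb t ht
      rw [Real.norm_eq_abs] at h3
      calc |1 + Q t| ≤ |(1:ℝ)| + |Q t| := abs_add_le _ _
        _ ≤ 1 + Qb := by rw [abs_one]; linarith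
    calc |2 * (z x0 * y t - y x0 * z t) * (z x0 * dy t - y x0 * dz t) * (1 + Q t)|
        = |2 * (z x0 * y t - y x0 * z t) * (z x0 * dy t - y x0 * dz t)| * |1 + Q t| :=
          abs_mul _ _
      _ ≤ ((z x0 * y t - y x0 * z t) ^ 2 + (z x0 * dy t - y x0 * dz t) ^ 2) * (1 + Qb) :=
          mul_le_mul h1 h2 (abs_nonneg _) (by positivity)
      _ = _ := mul_comm _ _
  have hF0 : (z x0 * y x0 - y x0 * z x0) ^ 2 + (z x0 * dy x0 - y x0 * dz x0) ^ 2 = 0 := by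
    rw [hv0, hdv0]; norm_num
  have hFx : (z x0 * y x - y x0 * z x) ^ 2 + (z x0 * dy x - y x0 * dz x) ^ 2 ≤ 0 := by
    rcases le_total x x0 with hxx | hxx
    · -- x ≤ x0 : F·exp((1+Qb)·) is nondecreasing on [x, x0]
      have hIcc : Set.Icc x x0 ⊆ Set.Icc s0 δ := fun t ht =>
        ⟨le_trans hs0x ht.1, le_trans ht.2 hx0.2⟩
      have hG : ∀ t ∈ Set.Icc x x0,
          HasDerivAt (fun s => ((z x0 * y s - y x0 * z s) ^ 2 + (z x0 * dy s - y x0 * dz s) ^ 2)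
              * Real.exp ((1 + Qb) * s))
            ((2 * (z x0 * y t - y x0 * z t) * (z x0 * dy t - y x0 * dz t) * (1 + Q t))
              * Real.exp ((1 + Qb) * t)
              + ((z x0 * y t - y x0 * z t) ^ 2 + (z x0 * dy t - y x0 * dz t) ^ 2)
              * (Real.exp ((1 + Qb) * t) * (1 + Qb))) t := by
        intro t ht
        have H := (hFD t (hs0δ (hIcc ht))).mul
          (((hasDerivAt_id' t).const_mul (1 + Qb)).exp)
        refine H.congr_deriv ?_; ring
      have hnn : ∀ t ∈ Set.Icc x x0,
          0 ≤ (2 * (z x0 * y t - y x0 * z t) * (z x0 * dy t - y x0 * dz t) * (1 + Q t))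
              * Real.exp ((1 + Qb) * t)
              + ((z x0 * y t - y x0 * z t) ^ 2 + (z x0 * dy t - y x0 * dz t) ^ 2)
              * (Real.exp ((1 + Qb) * t) * (1 + Qb)) := by
        intro t ht
        have hb := (abs_le.mp (hFbound t (hIcc ht))).1
        have he := Real.exp_pos ((1 + Qb) * t)
        nlinarith [mul_nonneg he.le (show 0 ≤
          2 * (z x0 * y t - y x0 * z t) * (z x0 * dy t - y x0 * dz t) * (1 + Q t)
            + (1 + Qb) * ((z x0 * y t - y x0 * z t) ^ 2 + (z x0 * dy t - y x0 * dz t) ^ 2)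
          by linarith)]
      have hle := deriv_ge_aux hxx hG hnn
      have hzero : ((z x0 * y x0 - y x0 * z x0) ^ 2 + (z x0 * dy x0 - y x0 * dz x0) ^ 2)
          * Real.exp ((1 + Qb) * x0) = 0 := by rw [hF0]; ring
      rw [hzero] at hle
      nlinarith [Real.exp_pos ((1 + Qb) * x), hle]
    · -- x0 ≤ x : F·exp(-(1+Qb)·) is nonincreasing on [x0, x]
      have hIcc : Set.Icc x0 x ⊆ Set.Icc s0 δ := fun t ht =>
        ⟨le_trans hs0x0 ht.1, le_trans ht.2 hx.2⟩
      have hG : ∀ t ∈ Set.Icc x0 x,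
          HasDerivAt (fun s => ((z x0 * y s - y x0 * z s) ^ 2 + (z x0 * dy s - y x0 * dz s) ^ 2)
              * Real.exp (-((1 + Qb) * s)))
            ((2 * (z x0 * y t - y x0 * z t) * (z x0 * dy t - y x0 * dz t) * (1 + Q t))
              * Real.exp (-((1 + Qb) * t))
              + ((z x0 * y t - y x0 * z t) ^ 2 + (z x0 * dy t - y x0 * dz t) ^ 2)
              * (Real.exp (-((1 + Qb) * t)) * (-(1 + Qb)))) t := by
        intro t ht
        have H := (hFD t (hs0δ (hIcc ht))).mul
          ((((hasDerivAt_id' t).const_mul (1 + Qb)).neg).exp)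
        refine H.congr_deriv ?_; simp only [Pi.neg_apply]; ring
      have hnp : ∀ t ∈ Set.Icc x0 x,
          (2 * (z x0 * y t - y x0 * z t) * (z x0 * dy t - y x0 * dz t) * (1 + Q t))
              * Real.exp (-((1 + Qb) * t))
              + ((z x0 * y t - y x0 * z t) ^ 2 + (z x0 * dy t - y x0 * dz t) ^ 2)
              * (Real.exp (-((1 + Qb) * t)) * (-(1 + Qb))) ≤ 0 := by
        intro t ht
        have hb := (abs_le.mp (hFbound t (hIcc ht))).2
        have he := Real.exp_pos (-((1 + Qb) * t))
        nlinarith [mul_nonneg he.le (show 0 ≤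
          (1 + Qb) * ((z x0 * y t - y x0 * z t) ^ 2 + (z x0 * dy t - y x0 * dz t) ^ 2)
            - 2 * (z x0 * y t - y x0 * z t) * (z x0 * dy t - y x0 * dz t) * (1 + Q t)
          by linarith)]
      have hle := deriv_le_aux hxx hG hnp
      have hzero : ((z x0 * y x0 - y x0 * z x0) ^ 2 + (z x0 * dy x0 - y x0 * dz x0) ^ 2)
          * Real.exp (-((1 + Qb) * x0)) = 0 := by rw [hF0]; ring
      rw [hzero] at hle
      nlinarith [Real.exp_pos (-((1 + Qb) * x)), hle]
  have hv2 : (z x0 * y x - y x0 * z x) ^ 2 = 0 :=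
    le_antisymm (by nlinarith [sq_nonneg (z x0 * dy x - y x0 * dz x)]) (sq_nonneg _)
  have hvx : z x0 * y x - y x0 * z x = 0 := by
    exact (pow_eq_zero_iff two_ne_zero).mp hv2
  linarith
end
end

section
/- Let R > 0 and let c : (0,R) → ℝ be continuous with c(r) > 0 for all r ∈ (0,R). Suppose φ : (0,R] → ℝ is twice continuously differentiable on (0,R], bounded, satisfies φ(r) ≥ 0 for all r ∈ (0,R), φ(R) = 0 and φ'(R) = 0, the integrability condition ∫_0^R c(r) φ(r) r² dr < ∞, and the differential equation φ''(r) + (2/r) φ'(r) − (2/r²) φ(r) + c(r) φ(r) = 0 on (0,R). Then φ is identically zero on (0,R]. -/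
open MeasureTheory Real Filter Topology

noncomputable section

/-- a bounded nonnegative C² solution of
`φ'' + (2/r)φ' − (2/r²)φ + cφ = 0` on `(0,R)` with `c > 0`, `φ(R) = 0`, `φ'(R) = 0`
and `∫ c φ r² dr < ∞` must vanish identically. -/
theorem statement_18 (R : ℝ) (hR : 0 < R)
    (c : ℝ → ℝ) (hc : ContinuousOn c (Set.Ioo 0 R))
    (hc0 : ∀ r ∈ Set.Ioo (0 : ℝ) R, 0 < c r)
    (φ dφ : ℝ → ℝ)
    (hφd : ∀ r ∈ Set.Ioc (0 : ℝ) R, HasDerivWithinAt φ (dφ r) (Set.Ioc 0 R) r)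
    (hdcont : ContinuousOn dφ (Set.Ioc 0 R))
    (hφ'' : ∀ r ∈ Set.Ioo (0 : ℝ) R,
      HasDerivWithinAt dφ (-(2 / r) * dφ r + (2 / r ^ 2) * φ r - c r * φ r)
        (Set.Ioc 0 R) r)
    (hbdd : ∃ B : ℝ, ∀ r ∈ Set.Ioc (0 : ℝ) R, |φ r| ≤ B)
    (hφ0 : ∀ r ∈ Set.Ioo (0 : ℝ) R, 0 ≤ φ r)
    (hφR : φ R = 0) (hdR : dφ R = 0)
    (hint : IntegrableOn (fun r => c r * φ r * r ^ 2) (Set.Ioo 0 R)) :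
    ∀ r ∈ Set.Ioc (0 : ℝ) R, φ r = 0 := by
  set g : ℝ → ℝ := fun r => r ^ 3 * dφ r - r ^ 2 * φ r with hg
  have hφcont : ContinuousOn φ (Set.Ioc 0 R) := fun r hr =>
    (hφd r hr).continuousWithinAt
  have hgcont : ContinuousOn g (Set.Ioc 0 R) :=
    ((continuousOn_pow 3).mul hdcont).sub ((continuousOn_pow 2).mul hφcont)
  have hintIoc : interior (Set.Ioc (0 : ℝ) R) = Set.Ioo 0 R := interior_Ioc
  -- derivative of g on the interior
  have hgderiv : ∀ r ∈ Set.Ioo (0 : ℝ) R, HasDerivAt g (-(c r * r ^ 3 * φ r)) r := by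
    intro r hr
    have hrne : r ≠ 0 := ne_of_gt hr.1
    have hmem : Set.Ioc (0 : ℝ) R ∈ 𝓝 r := Ioc_mem_nhds hr.1 hr.2
    have h1 : HasDerivAt φ (dφ r) r :=
      (hφd r ⟨hr.1, le_of_lt hr.2⟩).hasDerivAt hmem
    have h2 : HasDerivAt dφ (-(2 / r) * dφ r + (2 / r ^ 2) * φ r - c r * φ r) r :=
      (hφ'' r hr).hasDerivAt hmem
    have h3 : HasDerivAt (fun x : ℝ => x ^ 3) (3 * r ^ 2) r := by
      simpa using hasDerivAt_pow 3 r
    have h4 : HasDerivAt (fun x : ℝ => x ^ 2) (2 * r) r := by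
      simpa using hasDerivAt_pow 2 r
    have h5 := (h3.mul h2).sub (h4.mul h1)
    convert h5 using 1
    case e'_4 => rfl
    case e'_5 => rfl
    case e'_8 => rfl
    field_simp
    ring
  -- g is antitone on (0, R]
  have hganti : AntitoneOn g (Set.Ioc 0 R) := by
    apply antitoneOn_of_deriv_nonpos (convex_Ioc 0 R) hgcont
    · rw [hintIoc]
      exact fun r hr => ((hgderiv r hr).differentiableAt).differentiableWithinAt
    · rw [hintIoc]
      intro r hr
      rw [(hgderiv r hr).deriv]
      have hcpos := hc0 r hr
      have hppos := hφ0 r hr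
      have hrpos := hr.1
      have : 0 ≤ c r * r ^ 3 * φ r := by positivity
      linarith
  have hgR : g R = 0 := by simp [hg, hφR, hdR]
  have hgnonneg : ∀ r ∈ Set.Ioc (0 : ℝ) R, 0 ≤ g r := by
    intro r hr
    have := hganti hr (Set.right_mem_Ioc.2 hR) hr.2
    rwa [hgR] at this
  -- w = φ / r is monotone on (0, R]
  set w : ℝ → ℝ := fun r => φ r / r with hw
  have hwcont : ContinuousOn w (Set.Ioc 0 R) :=
    hφcont.div continuousOn_id (fun r hr => ne_of_gt hr.1)
  have hwderiv : ∀ r ∈ Set.Ioo (0 : ℝ) R,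
      HasDerivAt w (g r / r ^ 4) r := by
    intro r hr
    have hrne : r ≠ 0 := ne_of_gt hr.1
    have hmem : Set.Ioc (0 : ℝ) R ∈ 𝓝 r := Ioc_mem_nhds hr.1 hr.2
    have h1 : HasDerivAt φ (dφ r) r :=
      (hφd r ⟨hr.1, le_of_lt hr.2⟩).hasDerivAt hmem
    have h2 : HasDerivAt (fun x : ℝ => x) 1 r := hasDerivAt_id r
    have h5 := h1.div h2 hrne
    convert h5 using 1
    case e'_4 => rfl
    case e'_5 => rfl
    case e'_8 => rfl
    simp only [hg]
    field_simp
  have hwmono : MonotoneOn w (Set.Ioc 0 R) := by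
    apply monotoneOn_of_deriv_nonneg (convex_Ioc 0 R) hwcont
    · rw [hintIoc]
      exact fun r hr => ((hwderiv r hr).differentiableAt).differentiableWithinAt
    · rw [hintIoc]
      intro r hr
      rw [(hwderiv r hr).deriv]
      have h1 := hgnonneg r ⟨hr.1, le_of_lt hr.2⟩
      have h2 : (0:ℝ) < r ^ 4 := pow_pos hr.1 4
      exact div_nonneg h1 (le_of_lt h2)
  have hwR : w R = 0 := by simp [hw, hφR]
  intro r hr
  rcases eq_or_lt_of_le hr.2 with hrR | hrR
  · rw [hrR]; exact hφR
  · have hle := hwmono hr (Set.right_mem_Ioc.2 hR) hr.2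
    rw [hwR] at hle
    have h0 : 0 ≤ φ r := hφ0 r ⟨hr.1, hrR⟩
    have : φ r / r ≤ 0 := hle
    have hrpos := hr.1
    have hφle : φ r ≤ 0 := by
      have h := mul_nonpos_of_nonpos_of_nonneg this (le_of_lt hrpos)
      rwa [div_mul_cancel₀ _ (ne_of_gt hrpos)] at h
    linarith
end
end
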